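/- arXiv:1403.4477 — 3 statements merged into one kernel-verified Lean document; each statement's English description precedes it below -/
import Mathlib

section
/- Let 1 ≤ q < p < ∞. There is a constant C = C(p,q), independent of the interval I, such that every m ∈ V_q(I) can be written as m = Σ_j λ_j m_j where each m_j is a step function on I (finitely or countably many steps) whose coefficient sequence has ℓ^p norm at most 1, and Σ_j |λ_j| ≤ C ‖m‖_{V_q(I)}. Equivalently, V_q(I) ⊂ R_p(I) with inclusion norm bounded independently of I. -/
open Finset

noncomputable def varSum (q : ℝ) (m : ℝ → ℂ) (n : ℕ) (t : ℕ → ℝ) : ℝ :=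
  (∑ i ∈ Finset.range n, ‖m (t (i + 1)) - m (t i)‖ ^ q) ^ (1 / q)

def varSet (q a b : ℝ) (m : ℝ → ℂ) : Set ℝ :=
  {v | ∃ (n : ℕ) (t : ℕ → ℝ), t 0 = a ∧ t n = b ∧ (∀ i < n, t i < t (i + 1)) ∧
    v = varSum q m n t}

noncomputable def qVar (q a b : ℝ) (m : ℝ → ℂ) : ℝ := sSup (varSet q a b m)

/-- `f` belongs to the class `𝓡_p([a,b])`: it is a step function on `[a,b]`, constant on the
members of an (at most countable) partition of `[a,b]` into subintervals, whose coefficient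
sequence has `ℓ^p` norm at most `1`. -/
def InRclass (p a b : ℝ) (f : ℝ → ℂ) : Prop :=
  ∃ (J : ℕ → Set ℝ) (c : ℕ → ℂ),
    (∀ n, J n ⊆ Set.Icc a b) ∧
    (∀ n, (J n).OrdConnected) ∧
    Pairwise (Function.onFun Disjoint J) ∧
    (∀ x ∈ Set.Icc a b, ∃ n, x ∈ J n) ∧
    (∀ n, ∀ x ∈ J n, f x = c n) ∧
    (∀ n, J n = ∅ → c n = 0) ∧
    Summable (fun n => ‖c n‖ ^ p) ∧
    (∑' n, ‖c n‖ ^ p) ≤ 1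

section helpers

variable {q a b : ℝ} {m : ℝ → ℂ}

lemma rpow_inv_rpow' {x : ℝ} (hx : 0 ≤ x) (hq : q ≠ 0) : (x ^ q) ^ (1/q) = x := by
  rw [← Real.rpow_mul hx, mul_one_div, div_self hq, Real.rpow_one]

lemma rpow_rpow_inv' {x : ℝ} (hx : 0 ≤ x) (hq : q ≠ 0) : (x ^ (1/q)) ^ q = x := by
  rw [← Real.rpow_mul hx, one_div, inv_mul_cancel₀ hq, Real.rpow_one]

lemma mem_varSet_nonneg {x v : ℝ} (hv : v ∈ varSet q a x m) : 0 ≤ v := by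
  obtain ⟨n, t, -, -, -, rfl⟩ := hv
  exact Real.rpow_nonneg (Finset.sum_nonneg fun i _ => Real.rpow_nonneg (norm_nonneg _) q) _

lemma varSet_self (hq : 1 ≤ q) : varSet q a a m = {0} := by
  have hq0 : (1:ℝ)/q ≠ 0 := by positivity
  ext v
  simp only [Set.mem_singleton_iff]
  constructor
  · rintro ⟨n, t, h0, hn, hmono, rfl⟩
    rcases Nat.eq_zero_or_pos n with rfl | hn1
    · rw [varSum, Finset.sum_range_zero, Real.zero_rpow hq0]
    · exfalso
      have key : ∀ k, k ≤ n - 1 → t 0 ≤ t k := by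
        intro k hk
        induction k with
        | zero => exact le_refl _
        | succ k ih =>
          exact (ih (Nat.le_of_succ_le hk)).trans
            (le_of_lt (hmono k (by omega)))
      have h1 : t 0 ≤ t (n-1) := key _ le_rfl
      have h2 : t (n-1) < t n := by
        have h3 := hmono (n-1) (by omega)
        have h4 : n - 1 + 1 = n := by omega
        rwa [h4] at h3
      rw [h0] at h1; rw [hn] at h2; linarith
  · rintro rfl
    exact ⟨0, fun _ => a, rfl, rfl, by omega,
      by rw [varSum, Finset.sum_range_zero, Real.zero_rpow hq0]⟩

lemma qVar_self (hq : 1 ≤ q) : qVar q a a m = 0 := by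
  rw [qVar, varSet_self hq, csSup_singleton]

lemma single_mem_varSet (hq : 1 ≤ q) {x : ℝ} (hax : a < x) :
    ‖m x - m a‖ ∈ varSet q a x m := by
  have hq0 : q ≠ 0 := by positivity
  refine ⟨1, fun i => if i = 0 then a else x, by norm_num, by norm_num, ?_, ?_⟩
  · intro i hi; interval_cases i; simpa using hax
  · rw [varSum, Finset.sum_range_one]
    norm_num
    have h5 := rpow_inv_rpow' (x := ‖m x - m a‖) (norm_nonneg _) hq0
    rw [one_div] at h5
    exact h5.symm

/-- Extending a partition of `[a,x]` by the point `y`. -/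
lemma mem_varSet_extend (hq : 1 ≤ q) {x y v : ℝ} (hxy : x < y)
    (hv : v ∈ varSet q a x m) :
    (v ^ q + ‖m y - m x‖ ^ q) ^ (1/q) ∈ varSet q a y m := by
  have hq0 : q ≠ 0 := by positivity
  obtain ⟨n, t, h0, hn, hmono, rfl⟩ := hv
  refine ⟨n + 1, fun i => if i ≤ n then t i else y, by simp [h0], by simp, ?_, ?_⟩
  · intro i hi
    dsimp only
    rcases Nat.lt_or_ge i n with h | h
    · rw [if_pos (by omega), if_pos (by omega)]; exact hmono i h
    · have : i = n := by omega
      subst this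
      rw [if_pos le_rfl, if_neg (by omega), hn]; exact hxy
  · have hS : 0 ≤ ∑ i ∈ Finset.range n, ‖m (t (i + 1)) - m (t i)‖ ^ q :=
      Finset.sum_nonneg fun i _ => Real.rpow_nonneg (norm_nonneg _) q
    rw [varSum, varSum, rpow_rpow_inv' hS hq0]
    congr 1
    rw [Finset.sum_range_succ]
    congr 1
    · exact Finset.sum_congr rfl fun i hi => by
        rw [Finset.mem_range] at hi
        rw [if_pos (by omega), if_pos (by omega)]
    · rw [if_pos le_rfl, if_neg (by omega), hn]

lemma varSet_bddAbove (hq : 1 ≤ q) (hB : BddAbove (varSet q a b m))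
    {y : ℝ} (hay : a ≤ y) (hyb : y ≤ b) : BddAbove (varSet q a y m) := by
  rcases eq_or_lt_of_le hyb with rfl | hyb
  · exact hB
  · refine ⟨sSup (varSet q a b m), fun v hv => ?_⟩
    have hv0 := mem_varSet_nonneg hv
    have hmem := mem_varSet_extend hq hyb hv
    have h1 : v ≤ (v ^ q + ‖m b - m y‖ ^ q) ^ (1/q) := by
      calc v = (v ^ q) ^ (1/q) := (rpow_inv_rpow' hv0 (by positivity)).symm
        _ ≤ (v ^ q + ‖m b - m y‖ ^ q) ^ (1/q) :=
          Real.rpow_le_rpow (Real.rpow_nonneg hv0 _)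
            (le_add_of_nonneg_right (Real.rpow_nonneg (norm_nonneg _) _)) (by positivity)
    exact h1.trans (le_csSup hB hmem)

lemma qVar_nonneg (hq : 1 ≤ q) (hB : BddAbove (varSet q a b m))
    {x : ℝ} (hax : a ≤ x) (hxb : x ≤ b) : 0 ≤ qVar q a x m := by
  rcases eq_or_lt_of_le hax with rfl | hax
  · rw [qVar_self hq]
  · exact (norm_nonneg _).trans
      (le_csSup (varSet_bddAbove hq hB hax.le hxb) (single_mem_varSet hq hax))

/-- Superadditivity of the `q`-variation. -/
lemma qVar_key (hq : 1 ≤ q) (hB : BddAbove (varSet q a b m))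
    {x y : ℝ} (hax : a ≤ x) (hxy : x ≤ y) (hyb : y ≤ b) :
    ‖m y - m x‖ ^ q + (qVar q a x m) ^ q ≤ (qVar q a y m) ^ q := by
  have hq0 : q ≠ 0 := by positivity
  rcases eq_or_lt_of_le hxy with rfl | hxy
  · simp [Real.zero_rpow hq0]
  have hay : a ≤ y := hax.trans hxy.le
  have hSy : BddAbove (varSet q a y m) := varSet_bddAbove hq hB hay hyb
  have hsupy : 0 ≤ qVar q a y m := qVar_nonneg hq hB hay hyb
  set c := ‖m y - m x‖ ^ q with hc
  have hc0 : 0 ≤ c := Real.rpow_nonneg (norm_nonneg _) q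
  have step1 : ∀ v ∈ varSet q a x m, v ^ q + c ≤ (qVar q a y m) ^ q := by
    intro v hv
    have hv0 := mem_varSet_nonneg hv
    have hmem := mem_varSet_extend hq hxy hv
    have h1 : (v ^ q + c) ^ (1/q) ≤ qVar q a y m := le_csSup hSy hmem
    have h2 : ((v ^ q + c) ^ (1/q)) ^ q ≤ (qVar q a y m) ^ q :=
      Real.rpow_le_rpow (Real.rpow_nonneg (by positivity) _) h1 (by positivity)
    rwa [rpow_rpow_inv' (by positivity) hq0] at h2
  rcases eq_or_lt_of_le hax with rfl | hax
  · rw [qVar_self hq, Real.zero_rpow hq0, add_zero]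
    have := step1 0 (by rw [varSet_self hq]; rfl)
    rwa [Real.zero_rpow hq0, zero_add] at this
  · -- a < x
    have hx0 : 0 ≤ qVar q a x m := qVar_nonneg hq hB hax.le (hxy.le.trans hyb)
    have hne : (varSet q a x m).Nonempty := ⟨_, single_mem_varSet hq hax⟩
    set D := (qVar q a y m) ^ q - c with hD
    have hD0 : 0 ≤ D := by
      have := step1 _ (single_mem_varSet hq hax)
      have h0 : 0 ≤ ‖m x - m a‖ ^ q := Real.rpow_nonneg (norm_nonneg _) q
      simp only [hD]; linarith
    have step2 : qVar q a x m ≤ D ^ (1/q) := by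
      apply csSup_le hne
      intro v hv
      have hv0 := mem_varSet_nonneg hv
      have h1 : v ^ q ≤ D := by have := step1 v hv; simp only [hD]; linarith
      calc v = (v ^ q) ^ (1/q) := (rpow_inv_rpow' hv0 hq0).symm
        _ ≤ D ^ (1/q) := Real.rpow_le_rpow (Real.rpow_nonneg hv0 _) h1 (by positivity)
    have step3 : (qVar q a x m) ^ q ≤ D := by
      have := Real.rpow_le_rpow hx0 step2 (le_of_lt (by positivity : (0:ℝ) < q))
      rwa [rpow_rpow_inv' hD0 hq0] at this
    simp only [hD] at step3; linarith

end helpers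

set_option maxHeartbeats 1000000 in
/-- for `1 ≤ q < p` there is `C = C(p,q)`, independent of the interval, such that
every `m ∈ V_q([a,b])` can be written as `m = ∑_j λ_j m_j` with `m_j ∈ 𝓡_p([a,b])` and
`∑_j |λ_j| ≤ C‖m‖_{V_q}`; i.e. `V_q(I) ⊆ R_p(I)` with uniformly bounded inclusion norm. -/
theorem Vq_subset_Rp (p q : ℝ) (hq : 1 ≤ q) (hqp : q < p) :
    ∃ C > 0, ∀ a b : ℝ, a < b → ∀ m : ℝ → ℂ, BddAbove (varSet q a b m) →
      ∃ (lam : ℕ → ℂ) (g : ℕ → ℝ → ℂ),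
        (∀ j, InRclass p a b (g j)) ∧
        Summable (fun j => ‖lam j‖) ∧
        (∑' j, ‖lam j‖) ≤ C * (sSup ((fun x => ‖m x‖) '' Set.Icc a b) + qVar q a b m) ∧
        (∀ x ∈ Set.Icc a b, m x = ∑' j, lam j * g j x) := by
  have hq0 : (0:ℝ) < q := by linarith
  have hp1 : (1:ℝ) < p := by linarith
  have hp0 : (0:ℝ) < p := by linarith
  have hq0' : q ≠ 0 := ne_of_gt hq0
  have hp0' : p ≠ 0 := ne_of_gt hp0
  have hpow : ∀ (c : ℝ) (n : ℕ), ((2:ℝ) ^ n) ^ c = ((2:ℝ) ^ c) ^ n := by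
    intro c n
    rw [← Real.rpow_natCast 2 n, ← Real.rpow_mul (by norm_num : (0:ℝ) ≤ 2), mul_comm,
      Real.rpow_mul (by norm_num : (0:ℝ) ≤ 2), Real.rpow_natCast]
  set ρ : ℝ := (2:ℝ) ^ (1/p - 1/q) with hρdef
  have hρ0 : 0 < ρ := Real.rpow_pos_of_pos (by norm_num) _
  have hρ1 : ρ < 1 := by
    apply Real.rpow_lt_one_of_one_lt_of_neg (by norm_num)
    have : 1/p < 1/q := by
      apply one_div_lt_one_div_of_lt hq0 hqp
    linarith
  have hρform : ρ = (2:ℝ) ^ (1/p) / (2:ℝ) ^ (1/q) := Real.rpow_sub two_pos _ _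
  set CK : ℝ := (2:ℝ) ^ (1/p) * (1 - ρ)⁻¹ with hCK
  have hCKpos : 0 < CK :=
    mul_pos (Real.rpow_pos_of_pos two_pos _) (inv_pos.2 (by linarith))
  refine ⟨1 + CK, by linarith, ?_⟩
  intro a b hab m hB
  classical
  -- basic objects
  set M : ℝ := sSup ((fun x => ‖m x‖) '' Set.Icc a b) with hM
  set V : ℝ := qVar q a b m with hV
  set w : ℝ → ℝ := fun x => (qVar q a x m) ^ q with hw
  have hV0 : 0 ≤ V := qVar_nonneg hq hB hab.le le_rfl
  have hkey : ∀ x ∈ Set.Icc a b, ∀ y ∈ Set.Icc a b, x ≤ y →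
      ‖m y - m x‖ ^ q + w x ≤ w y := fun x hx y hy hxy =>
    qVar_key hq hB hx.1 hxy hy.2
  have hw0 : ∀ x ∈ Set.Icc a b, 0 ≤ w x := fun x hx =>
    Real.rpow_nonneg (qVar_nonneg hq hB hx.1 hx.2) q
  have hwb : w b = V ^ q := rfl
  have hwV : ∀ x ∈ Set.Icc a b, w x ≤ V ^ q := by
    intro x hx
    have h1 := hkey x hx b ⟨hab.le, le_rfl⟩ hx.2
    have h0 : 0 ≤ ‖m b - m x‖ ^ q := Real.rpow_nonneg (norm_nonneg _) q
    rw [hwb] at h1; linarith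
  have hwa : w a = 0 := by
    show (qVar q a a m) ^ q = 0
    rw [qVar_self hq, Real.zero_rpow hq0']
  -- boundedness of m
  have hrpow_cancel : ∀ {x y : ℝ}, 0 ≤ x → 0 ≤ y → x ^ q ≤ y ^ q → x ≤ y := by
    intro x y hx hy h
    have h2 := Real.rpow_le_rpow (Real.rpow_nonneg hx q) h (by positivity : (0:ℝ) ≤ 1/q)
    rwa [rpow_inv_rpow' hx hq0', rpow_inv_rpow' hy hq0'] at h2
  have hnormx : ∀ x ∈ Set.Icc a b, ‖m x‖ ≤ ‖m a‖ + V := by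
    intro x hx
    have h1 : ‖m x - m a‖ ^ q + w a ≤ w x := hkey a ⟨le_rfl, hab.le⟩ x hx hx.1
    rw [hwa, add_zero] at h1
    have h2 : ‖m x - m a‖ ≤ V := hrpow_cancel (norm_nonneg _) hV0 (h1.trans (hwV x hx))
    have h3 := norm_sub_norm_le (m x) (m a)
    linarith
  have hMbdd : BddAbove ((fun x => ‖m x‖) '' Set.Icc a b) :=
    ⟨‖m a‖ + V, by rintro _ ⟨x, hx, rfl⟩; exact hnormx x hx⟩
  have hMx : ∀ x ∈ Set.Icc a b, ‖m x‖ ≤ M := fun x hx => le_csSup hMbdd ⟨x, hx, rfl⟩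
  have hM0 : 0 ≤ M := (norm_nonneg (m a)).trans (hMx a ⟨le_rfl, hab.le⟩)
  -- dyadic levels of w
  set δ : ℕ → ℝ := fun k => V ^ q / 2 ^ k with hδ
  have hδ0 : ∀ k, 0 ≤ δ k := fun k => div_nonneg (Real.rpow_nonneg hV0 q) (by positivity)
  set ℓ : ℕ → ℝ → ℕ := fun k x => min ⌊w x / δ k⌋₊ (2 ^ k - 1) with hℓ
  have hVqδ : ∀ k, V ^ q = 2 ^ k * δ k := by
    intro k; rw [hδ]; field_simp
  have hlb : ∀ k, ∀ x ∈ Set.Icc a b, (ℓ k x : ℝ) * δ k ≤ w x := by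
    intro k x hx
    rcases eq_or_lt_of_le (hδ0 k) with h0 | hpos
    · rw [← h0, mul_zero]; exact hw0 x hx
    · have h1 : (ℓ k x : ℝ) ≤ w x / δ k := by
        have h2 : (ℓ k x : ℕ) ≤ ⌊w x / δ k⌋₊ := min_le_left _ _
        calc (ℓ k x : ℝ) ≤ (⌊w x / δ k⌋₊ : ℝ) := Nat.cast_le.2 h2
          _ ≤ w x / δ k := Nat.floor_le (div_nonneg (hw0 x hx) hpos.le)
      calc (ℓ k x : ℝ) * δ k ≤ (w x / δ k) * δ k := by nlinarith
        _ = w x := div_mul_cancel₀ _ hpos.ne'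
  have hub : ∀ k, ∀ x ∈ Set.Icc a b, w x ≤ ((ℓ k x : ℝ) + 1) * δ k := by
    intro k x hx
    rcases eq_or_lt_of_le (hδ0 k) with h0 | hpos
    · have h1 : w x ≤ 0 := by
        have h2 := hwV x hx
        rw [hVqδ k, ← h0, mul_zero] at h2; exact h2
      nlinarith [hw0 x hx]
    · by_cases hfl : ⌊w x / δ k⌋₊ ≤ 2 ^ k - 1
      · have hval : ℓ k x = ⌊w x / δ k⌋₊ := min_eq_left hfl
        have h2 : w x / δ k < ⌊w x / δ k⌋₊ + 1 := Nat.lt_floor_add_one _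
        rw [hval]
        calc w x = (w x / δ k) * δ k := (div_mul_cancel₀ _ hpos.ne').symm
          _ ≤ ((⌊w x / δ k⌋₊ : ℝ) + 1) * δ k := by nlinarith
      · push_neg at hfl
        have hval : ℓ k x = 2 ^ k - 1 := min_eq_right (by omega)
        have hone : (1:ℕ) ≤ 2 ^ k := Nat.one_le_two_pow
        have hcast : ((ℓ k x : ℝ) + 1) = (2:ℝ) ^ k := by
          rw [hval, Nat.cast_sub hone]; push_cast; ring
        rw [hcast, ← hVqδ k]
        exact hwV x hx
  have hsame : ∀ k, ∀ x ∈ Set.Icc a b, ∀ y ∈ Set.Icc a b, ℓ k x = ℓ k y →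
      ‖m y - m x‖ ≤ δ k ^ (1/q) := by
    intro k x hx y hy hxy
    have main : ∀ u, u ∈ Set.Icc a b → ∀ v, v ∈ Set.Icc a b → u ≤ v → ℓ k u = ℓ k v →
        ‖m v - m u‖ ≤ δ k ^ (1/q) := by
      intro u hu v hv huv he
      have h1 := hkey u hu v hv huv
      have h2 := hlb k u hu
      have h3 := hub k v hv
      rw [he] at h2
      have h4 : ‖m v - m u‖ ^ q ≤ δ k := by nlinarith
      calc ‖m v - m u‖ = (‖m v - m u‖ ^ q) ^ (1/q) :=
            (rpow_inv_rpow' (norm_nonneg _) hq0').symm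
        _ ≤ δ k ^ (1/q) :=
            Real.rpow_le_rpow (Real.rpow_nonneg (norm_nonneg _) _) h4 (by positivity)
    rcases le_total x y with h | h
    · exact main x hx y hy h hxy
    · rw [norm_sub_rev]; exact main y hy x hx h hxy.symm
  have hnat : ∀ (f K : ℕ), 1 ≤ K → min f (2*K - 1) / 2 = min (f/2) (K - 1) := by
    intro f K hK; omega
  have hnest : ∀ k, ∀ x ∈ Set.Icc a b, ℓ k x = ℓ (k+1) x / 2 := by
    intro k x hx
    rcases eq_or_lt_of_le (hδ0 (k+1)) with h0 | hpos
    · have hVq0 : V ^ q = 0 := by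
        have := hVqδ (k+1); rw [← h0, mul_zero] at this; exact this
      have hδk : δ k = 0 := by rw [hδ]; simp [hVq0]
      have hδk1 : δ (k+1) = 0 := by rw [hδ]; simp [hVq0]
      simp only [hℓ, hδk, hδk1, div_zero, Nat.floor_zero]
      omega
    · have hδk : δ k = 2 * δ (k+1) := by
        rw [hδ]; dsimp only; rw [pow_succ]; field_simp
      have h1 : w x / δ k = (w x / δ (k+1)) / 2 := by rw [hδk]; ring
      have h2 : ⌊w x / δ k⌋₊ = ⌊w x / δ (k+1)⌋₊ / 2 := by
        rw [h1, show ((2:ℝ)) = ((2:ℕ):ℝ) by norm_num]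
        exact Nat.floor_div_natCast _ 2
      have h3 : (2:ℕ) ^ (k+1) = 2 * 2 ^ k := by rw [pow_succ]; ring
      simp only [hℓ]
      rw [h2, h3, ← hnat _ (2^k) Nat.one_le_two_pow]
  -- level sets, representatives, step approximations
  set L : ℕ → ℕ → Set ℝ := fun k i => {x | x ∈ Set.Icc a b ∧ ℓ k x = i} with hL
  have hLmem : ∀ k i x, x ∈ L k i ↔ x ∈ Set.Icc a b ∧ ℓ k x = i := by
    intro k i x; rw [hL]; rfl
  set r : ℕ → ℕ → ℝ := fun k i => if h : (L k i).Nonempty then h.some else a with hr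
  have hrmem : ∀ k i, (L k i).Nonempty → r k i ∈ Set.Icc a b ∧ ℓ k (r k i) = i := by
    intro k i hne
    have : r k i ∈ L k i := by rw [hr]; dsimp only; rw [dif_pos hne]; exact hne.some_mem
    exact (hLmem k i _).1 this
  set s : ℕ → ℝ → ℂ := fun k x => m (r k (ℓ k x)) with hs
  have hℓ0 : ∀ x, ℓ 0 x = 0 := by intro x; simp [hℓ]
  have hℓlt : ∀ k x, ℓ k x < 2 ^ k := by
    intro k x
    have h1 : ℓ k x ≤ 2 ^ k - 1 := min_le_right _ _
    have h2 : (1:ℕ) ≤ 2 ^ k := Nat.one_le_two_pow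
    omega
  have hmemL : ∀ k, ∀ x ∈ Set.Icc a b, x ∈ L k (ℓ k x) := fun k x hx =>
    (hLmem k _ x).2 ⟨hx, rfl⟩
  have happrox : ∀ k, ∀ x ∈ Set.Icc a b, ‖m x - s k x‖ ≤ δ k ^ (1/q) := by
    intro k x hx
    have hne : (L k (ℓ k x)).Nonempty := ⟨x, hmemL k x hx⟩
    obtain ⟨hrI, hrl⟩ := hrmem k _ hne
    exact hsame k _ hrI x hx hrl
  have hdiff : ∀ k, ∀ x ∈ Set.Icc a b, ‖s (k+1) x - s k x‖ ≤ δ k ^ (1/q) := by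
    intro k x hx
    have hne1 : (L (k+1) (ℓ (k+1) x)).Nonempty := ⟨x, hmemL (k+1) x hx⟩
    obtain ⟨h1I, h1l⟩ := hrmem (k+1) _ hne1
    have hkx : ℓ k x = ℓ (k+1) x / 2 := hnest k x hx
    have hne0 : (L k (ℓ (k+1) x / 2)).Nonempty := ⟨x, (hLmem _ _ x).2 ⟨hx, hkx⟩⟩
    obtain ⟨h0I, h0l⟩ := hrmem k _ hne0
    have h2 : ℓ k (r (k+1) (ℓ (k+1) x)) = ℓ (k+1) x / 2 := by
      rw [hnest k _ h1I, h1l]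
    have h3 := hsame k (r (k+1) (ℓ (k+1) x)) h1I (r k (ℓ (k+1) x / 2)) h0I (by rw [h2, h0l])
    rw [norm_sub_rev] at h3
    show ‖m (r (k+1) (ℓ (k+1) x)) - m (r k (ℓ k x))‖ ≤ δ k ^ (1/q)
    rw [hkx]
    exact h3
  -- closed forms
  have hδform : ∀ k, δ k ^ (1/q) = V / ((2:ℝ) ^ (1/q)) ^ k := by
    intro k
    rw [hδ]; dsimp only
    rw [Real.div_rpow (Real.rpow_nonneg hV0 q) (by positivity : (0:ℝ) ≤ 2 ^ k),
      rpow_inv_rpow' hV0 hq0', hpow (1/q) k]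
  set Λ : ℕ → ℝ := fun k => δ k ^ (1/q) * ((2:ℝ) ^ (k+1)) ^ (1/p) with hΛ
  have hβ : (0:ℝ) < (2:ℝ) ^ (1/q) := Real.rpow_pos_of_pos two_pos _
  have hΛform : ∀ k, Λ k = (V * (2:ℝ) ^ (1/p)) * ρ ^ k := by
    intro k
    rw [hΛ]; dsimp only
    rw [hδform k, hρform, hpow (1/p) (k+1), div_pow]
    field_simp
    ring
  have hΛ0 : ∀ k, 0 ≤ Λ k := by
    intro k; rw [hΛform]; positivity
  have hsumΛ : Summable Λ :=
    ((summable_geometric_of_lt_one hρ0.le hρ1).mul_left (V * (2:ℝ) ^ (1/p))).congr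
      fun k => (hΛform k).symm
  have htsumΛ : ∑' k, Λ k = (V * (2:ℝ) ^ (1/p)) * (1 - ρ)⁻¹ := by
    calc ∑' k, Λ k = ∑' k, (V * (2:ℝ) ^ (1/p)) * ρ ^ k := tsum_congr hΛform
      _ = (V * (2:ℝ) ^ (1/p)) * ∑' k, ρ ^ k := tsum_mul_left
      _ = _ := by rw [tsum_geometric_of_lt_one hρ0.le hρ1]
  -- the decomposition
  set A : ℂ := m (r 0 0) with hA
  have hr00 : r 0 0 ∈ Set.Icc a b := by
    have hne : (L 0 0).Nonempty := ⟨a, (hLmem 0 0 a).2 ⟨⟨le_rfl, hab.le⟩, hℓ0 a⟩⟩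
    exact (hrmem 0 0 hne).1
  have hAM : ‖A‖ ≤ M := hMx _ hr00
  set lam : ℕ → ℂ := fun j => if j = 0 then ((‖A‖:ℝ) : ℂ) else ((Λ (j-1) : ℝ) : ℂ) with hlam
  set g : ℕ → ℝ → ℂ := fun j => if j = 0 then (fun _ => if A = 0 then 0 else A / ‖A‖)
      else (fun x => (s j x - s (j-1) x) / ((Λ (j-1) : ℝ) : ℂ)) with hg
  have hΛzero : ∀ k, Λ k = 0 → δ k ^ (1/q) = 0 := by
    intro k h0
    have hB2 : (0:ℝ) < ((2:ℝ) ^ (k+1)) ^ (1/p) := by positivity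
    rw [hΛ] at h0; dsimp only at h0
    rcases mul_eq_zero.1 h0 with h | h
    · exact h
    · exact absurd h hB2.ne'
  have hlamg : ∀ k, ∀ x ∈ Set.Icc a b, lam (k+1) * g (k+1) x = s (k+1) x - s k x := by
    intro k x hx
    simp only [hlam, hg, Nat.succ_ne_zero, if_false, Nat.add_sub_cancel]
    rcases eq_or_lt_of_le (hΛ0 k) with h0 | hpos
    · have hd0 : s (k+1) x - s k x = 0 := by
        have h1 := hdiff k x hx
        rw [hΛzero k h0.symm] at h1
        exact norm_le_zero_iff.1 h1
      rw [hd0, ← h0]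
      simp
    · have hne : ((Λ k : ℝ) : ℂ) ≠ 0 := by
        exact_mod_cast hpos.ne'
      field_simp
  have hpartial : ∀ (K : ℕ), ∀ x ∈ Set.Icc a b,
      ∑ j ∈ Finset.range (K+1), lam j * g j x = s K x := by
    intro K x hx
    induction K with
    | zero =>
      rw [Finset.sum_range_one]
      have hs0 : s 0 x = A := by rw [hs]; dsimp only; rw [hℓ0 x]
      simp only [hlam, hg, if_pos rfl]
      rw [hs0]
      by_cases hA0 : A = 0
      · simp [hA0]
      · rw [if_neg hA0]
        have hne : ((‖A‖:ℝ) : ℂ) ≠ 0 := by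
          exact_mod_cast (norm_ne_zero_iff.2 hA0)
        rw [mul_div_assoc']
        rw [mul_comm]
        exact mul_div_cancel_right₀ A hne
    | succ K ih =>
      rw [Finset.sum_range_succ, ih, hlamg K x hx]
      ring
  have hone_le : ∀ k:ℕ, (1:ℝ) ≤ ((2:ℝ) ^ (k+1)) ^ (1/p) := by
    intro k
    apply Real.one_le_rpow (one_le_pow₀ (by norm_num)) (by positivity)
  have hδΛ : ∀ k, δ k ^ (1/q) ≤ Λ k := by
    intro k
    rw [hΛ]; dsimp only
    exact le_mul_of_one_le_right (Real.rpow_nonneg (hδ0 k) _) (hone_le k)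
  have hsummand : ∀ x ∈ Set.Icc a b, Summable (fun j => lam j * g j x) := by
    intro x hx
    rw [← summable_nat_add_iff 1]
    apply Summable.of_norm_bounded hsumΛ
    intro k
    rw [hlamg k x hx]
    exact (hdiff k x hx).trans (hδΛ k)
  have hlamnorm : ∀ k, ‖lam (k+1)‖ = Λ k := by
    intro k
    simp only [hlam, Nat.succ_ne_zero, if_false, Nat.add_sub_cancel]
    rw [Complex.norm_real]
    exact Real.norm_of_nonneg (hΛ0 k)
  have hsumlam : Summable (fun j => ‖lam j‖) := by
    rw [← summable_nat_add_iff 1]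
    exact hsumΛ.congr fun k => (hlamnorm k).symm
  have htsumlam : ∑' j, ‖lam j‖ = ‖A‖ + (V * (2:ℝ) ^ (1/p)) * (1 - ρ)⁻¹ := by
    rw [Summable.tsum_eq_zero_add hsumlam]
    congr 1
    · simp only [hlam, if_pos rfl]
      rw [Complex.norm_real, norm_norm]
    · rw [← htsumΛ]
      exact tsum_congr hlamnorm
  -- convergence of the approximations
  have hδtend : Filter.Tendsto (fun k => δ k ^ (1/q)) Filter.atTop (nhds 0) := by
    have h2 : ((2:ℝ) ^ (1/q))⁻¹ < 1 := by
      rw [inv_lt_one_iff₀]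
      right
      exact (Real.one_lt_rpow_iff_of_pos two_pos).2 (Or.inl ⟨one_lt_two, by positivity⟩)
    have h3 := tendsto_pow_atTop_nhds_zero_of_lt_one (by positivity : (0:ℝ) ≤ ((2:ℝ) ^ (1/q))⁻¹) h2
    have h4 := h3.const_mul V
    rw [mul_zero] at h4
    apply h4.congr
    intro k
    rw [hδform k]
    ring
  have hpointwise : ∀ x ∈ Set.Icc a b, m x = ∑' j, lam j * g j x := by
    intro x hx
    have hsum := hsummand x hx
    have h1 := hsum.hasSum.tendsto_sum_nat
    have h3 : Filter.Tendsto (fun K => s K x) Filter.atTop (nhds (m x)) := by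
      have h4 : Filter.Tendsto (fun K => s K x - m x) Filter.atTop (nhds 0) := by
        apply squeeze_zero_norm (fun K => ?_) hδtend
        rw [norm_sub_rev]
        exact happrox K x hx
      have h5 := h4.add (tendsto_const_nhds (x := m x))
      rw [zero_add] at h5
      apply h5.congr
      intro K; ring
    have h2 : Filter.Tendsto (fun K => ∑ j ∈ Finset.range (K+1), lam j * g j x)
        Filter.atTop (nhds (m x)) :=
      h3.congr fun K => (hpartial K x hx).symm
    have h6 : Filter.Tendsto (fun n => ∑ j ∈ Finset.range n, lam j * g j x)
        Filter.atTop (nhds (m x)) :=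
      (Filter.tendsto_add_atTop_iff_nat 1).1 h2
    exact (tendsto_nhds_unique h1 h6).symm
  -- monotonicity of levels, ord-connectedness
  have hℓmono : ∀ k, ∀ x ∈ Set.Icc a b, ∀ y ∈ Set.Icc a b, x ≤ y → ℓ k x ≤ ℓ k y := by
    intro k x hx y hy hxy
    rcases eq_or_lt_of_le (hδ0 k) with h0 | hpos
    · have hdz : δ k = 0 := h0.symm
      have hz : ∀ z : ℝ, ℓ k z = 0 := by
        intro z
        simp only [hℓ]
        rw [hdz, div_zero, Nat.floor_zero]
        exact min_eq_left (Nat.zero_le _)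
      rw [hz x, hz y]
    · have hwm : w x ≤ w y := by
        have h1 := hkey x hx y hy hxy
        nlinarith [Real.rpow_nonneg (norm_nonneg (m y - m x)) q]
      have hfl : ⌊w x / δ k⌋₊ ≤ ⌊w y / δ k⌋₊ :=
        Nat.floor_mono ((div_le_div_iff_of_pos_right hpos).2 hwm)
      simp only [hℓ]
      exact min_le_min hfl le_rfl
  have hLoc : ∀ k i, (L k i).OrdConnected := by
    intro k i
    rw [Set.ordConnected_iff]
    intro x hx y hy hxy z hz
    obtain ⟨hxI, hxl⟩ := (hLmem k i x).1 hx
    obtain ⟨hyI, hyl⟩ := (hLmem k i y).1 hy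
    have hzI : z ∈ Set.Icc a b := ⟨hxI.1.trans hz.1, hz.2.trans hyI.2⟩
    have h1 := hℓmono k x hxI z hzI hz.1
    have h2 := hℓmono k z hzI y hyI hz.2
    exact (hLmem k i z).2 ⟨hzI, by omega⟩
  -- the classes
  have hRclass0 : InRclass p a b (fun _ => if A = 0 then 0 else A / ‖A‖) := by
    refine ⟨fun n => if n = 0 then Set.Icc a b else ∅,
      fun n => if n = 0 then (if A = 0 then 0 else A / ‖A‖) else 0, ?_, ?_, ?_, ?_, ?_, ?_, ?_, ?_⟩
    · intro n; dsimp only; split_ifs; exacts [subset_rfl, Set.empty_subset _]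
    · intro n; dsimp only; split_ifs; exacts [Set.ordConnected_Icc, Set.ordConnected_empty]
    · intro i j hij
      simp only [Function.onFun]
      rcases eq_or_ne i 0 with rfl | hi
      · rw [if_neg (Ne.symm hij)]; exact Set.disjoint_empty _
      · rw [if_neg hi]; exact Set.empty_disjoint _
    · intro x hx; exact ⟨0, by dsimp only; rw [if_pos rfl]; exact hx⟩
    · intro n x hxn
      dsimp only at hxn ⊢
      rcases eq_or_ne n 0 with rfl | hn
      · rw [if_pos rfl]
      · rw [if_neg hn] at hxn; exact absurd hxn (Set.notMem_empty x)
    · intro n hempty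
      dsimp only at hempty ⊢
      rcases eq_or_ne n 0 with rfl | hn
      · rw [if_pos rfl] at hempty
        exact (((Set.nonempty_Icc.2 hab.le).ne_empty) hempty).elim
      · rw [if_neg hn]
    · apply summable_of_ne_finset_zero (s := ({0} : Finset ℕ))
      intro n hn
      simp only [Finset.mem_singleton] at hn
      dsimp only
      rw [if_neg hn, norm_zero, Real.zero_rpow hp0']
    · rw [tsum_eq_sum (s := ({0} : Finset ℕ)) (fun n hn => by
        simp only [Finset.mem_singleton] at hn
        dsimp only
        rw [if_neg hn, norm_zero, Real.zero_rpow hp0'])]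
      rw [Finset.sum_singleton]
      dsimp only
      rw [if_pos rfl]
      have h1 : ‖if A = 0 then (0:ℂ) else A / ‖A‖‖ ≤ 1 := by
        split_ifs with h
        · simp
        · rw [norm_div, Complex.norm_real, norm_norm,
            div_self (norm_ne_zero_iff.2 h)]
      exact Real.rpow_le_one (norm_nonneg _) h1 hp0.le
  have hRclass1 : ∀ k, InRclass p a b (fun x => (s (k+1) x - s k x) / ((Λ k : ℝ) : ℂ)) := by
    intro k
    refine ⟨fun i => if i < 2^(k+1) then L (k+1) i else ∅,
      fun i => if h : i < 2^(k+1) ∧ (L (k+1) i).Nonempty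
        then (m (r (k+1) i) - m (r k (i/2))) / ((Λ k : ℝ) : ℂ) else 0,
      ?_, ?_, ?_, ?_, ?_, ?_, ?_, ?_⟩
    · intro n; dsimp only; split_ifs
      · intro x hx; exact ((hLmem (k+1) n x).1 hx).1
      · exact Set.empty_subset _
    · intro n; dsimp only; split_ifs; exacts [hLoc (k+1) n, Set.ordConnected_empty]
    · intro i j hij
      simp only [Function.onFun]
      split_ifs
      · rw [Set.disjoint_left]
        intro x hxi hxj
        have h1 := ((hLmem (k+1) i x).1 hxi).2
        have h2 := ((hLmem (k+1) j x).1 hxj).2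
        exact hij (h1.symm.trans h2)
      · exact Set.disjoint_empty _
      · exact Set.empty_disjoint _
      · exact Set.disjoint_empty _
    · intro x hx
      exact ⟨ℓ (k+1) x, by dsimp only; rw [if_pos (hℓlt (k+1) x)]; exact hmemL (k+1) x hx⟩
    · intro n x hxn
      dsimp only at hxn ⊢
      by_cases hn : n < 2^(k+1)
      · rw [if_pos hn] at hxn
        obtain ⟨hxI, hxl⟩ := (hLmem (k+1) n x).1 hxn
        rw [dif_pos ⟨hn, ⟨x, hxn⟩⟩]
        show (m (r (k+1) (ℓ (k+1) x)) - m (r k (ℓ k x))) / ((Λ k : ℝ) : ℂ) = _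
        rw [hnest k x hxI, hxl]
      · rw [if_neg hn] at hxn; exact absurd hxn (Set.notMem_empty x)
    · intro n hempty
      dsimp only at hempty ⊢
      by_cases hn : n < 2^(k+1)
      · rw [if_pos hn] at hempty
        rw [dif_neg]
        rintro ⟨-, hne⟩
        rw [hempty] at hne
        exact Set.not_nonempty_empty hne
      · rw [dif_neg]
        rintro ⟨h1, -⟩
        exact hn h1
    · apply summable_of_ne_finset_zero (s := Finset.range (2^(k+1)))
      intro n hn
      rw [Finset.mem_range] at hn
      dsimp only
      rw [dif_neg (fun hc => hn hc.1), norm_zero, Real.zero_rpow hp0']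
    · rw [tsum_eq_sum (s := Finset.range (2^(k+1))) (fun n hn => by
        rw [Finset.mem_range] at hn
        dsimp only
        rw [dif_neg (fun hc => hn hc.1), norm_zero, Real.zero_rpow hp0'])]
      have hbound : ∀ i ∈ Finset.range (2^(k+1)),
          ‖if h : i < 2^(k+1) ∧ (L (k+1) i).Nonempty
            then (m (r (k+1) i) - m (r k (i/2))) / ((Λ k : ℝ) : ℂ) else 0‖ ^ p
          ≤ ((2:ℝ)^(k+1))⁻¹ := by
        intro i hi
        rw [Finset.mem_range] at hi
        by_cases hne : (L (k+1) i).Nonempty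
        · rw [dif_pos ⟨hi, hne⟩]
          obtain ⟨h1I, h1l⟩ := hrmem (k+1) i hne
          have hne0 : (L k (i/2)).Nonempty := by
            refine ⟨r (k+1) i, (hLmem k (i/2) _).2 ⟨h1I, ?_⟩⟩
            rw [hnest k _ h1I, h1l]
          obtain ⟨h0I, h0l⟩ := hrmem k (i/2) hne0
          have hnm : ‖m (r (k+1) i) - m (r k (i/2))‖ ≤ δ k ^ (1/q) := by
            have h3 := hsame k (r k (i/2)) h0I (r (k+1) i) h1I
              (by rw [h0l, hnest k _ h1I, h1l])
            exact h3
          rcases eq_or_lt_of_le (hΛ0 k) with h0 | hpos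
          · have hz : m (r (k+1) i) - m (r k (i/2)) = 0 := by
              apply norm_le_zero_iff.1
              rw [← hΛzero k h0.symm]
              exact hnm
            rw [hz, zero_div, norm_zero, Real.zero_rpow hp0']
            positivity
          · have hδpos : 0 < δ k ^ (1/q) := by
              rcases (hδ0 k).eq_or_lt with h | h
              · exfalso
                rw [hΛ] at hpos; dsimp only at hpos
                rw [← h, Real.zero_rpow (by positivity : 1/q ≠ 0), zero_mul] at hpos
                exact lt_irrefl _ hpos
              · exact Real.rpow_pos_of_pos h _
            set B := ((2:ℝ)^(k+1)) ^ (1/p) with hBdef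
            have hBpos : (0:ℝ) < B := by positivity
            have hle : ‖(m (r (k+1) i) - m (r k (i/2))) / ((Λ k : ℝ) : ℂ)‖ ≤ B⁻¹ := by
              rw [norm_div, Complex.norm_real, Real.norm_of_nonneg (hΛ0 k)]
              rw [div_le_iff₀ hpos]
              calc ‖m (r (k+1) i) - m (r k (i/2))‖ ≤ δ k ^ (1/q) := hnm
                _ = B⁻¹ * Λ k := by
                  rw [hΛ]; dsimp only; rw [← hBdef]
                  field_simp
            calc ‖(m (r (k+1) i) - m (r k (i/2))) / ((Λ k : ℝ) : ℂ)‖ ^ p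
                ≤ (B⁻¹) ^ p := Real.rpow_le_rpow (norm_nonneg _) hle hp0.le
              _ = ((2:ℝ)^(k+1))⁻¹ := by
                  rw [Real.inv_rpow hBpos.le, hBdef,
                    rpow_rpow_inv' (by positivity : (0:ℝ) ≤ (2:ℝ)^(k+1)) hp0']
        · rw [dif_neg (fun hc => hne hc.2), norm_zero, Real.zero_rpow hp0']
          positivity
      calc ∑ i ∈ Finset.range (2^(k+1)), _ ≤
          (Finset.range (2^(k+1))).card • ((2:ℝ)^(k+1))⁻¹ :=
            Finset.sum_le_card_nsmul _ _ _ hbound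
        _ = 1 := by
            rw [Finset.card_range, nsmul_eq_mul]
            push_cast
            rw [mul_inv_cancel₀ (by positivity)]
  -- assemble
  refine ⟨lam, g, ?_, hsumlam, ?_, hpointwise⟩
  · intro j
    rcases j with _ | k
    · have hg0 : g 0 = fun _ => if A = 0 then 0 else A / ‖A‖ := by
        rw [hg]
        rfl
      rw [hg0]; exact hRclass0
    · have hgk : g (k+1) = fun x => (s (k+1) x - s k x) / ((Λ k : ℝ) : ℂ) := by
        rw [hg]; dsimp only; rw [if_neg (Nat.succ_ne_zero k), Nat.add_sub_cancel]
      rw [hgk]; exact hRclass1 k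
  · rw [htsumlam]
    have hterm : (V * (2:ℝ) ^ (1/p)) * (1 - ρ)⁻¹ = CK * V := by rw [hCK]; ring
    rw [hterm]
    nlinarith [hAM, hM0, hV0, hCKpos.le, mul_nonneg hCKpos.le hM0]
end

section
/- If w ∈ A_1(ℝ) and s > 1 is such that w^s ∈ A_1(ℝ), then w ∈ RH_s(ℝ); conversely if w ∈ A_1(ℝ) ∩ RH_s(ℝ) for some s > 1 then w^s ∈ A_∞(ℝ). -/
open MeasureTheory

noncomputable def intervalAvg (w : ℝ → ℝ) (a b : ℝ) : ℝ := (∫ x in a..b, w x) / (b - a)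

def ApWith (p : ℝ) (w : ℝ → ℝ) (C : ℝ) : Prop :=
  ∀ a b : ℝ, a < b →
    intervalAvg w a b * (intervalAvg (fun x => w x ^ (-1 / (p - 1))) a b) ^ (p - 1) ≤ C

def A1With (w : ℝ → ℝ) (C : ℝ) : Prop :=
  ∀ᵐ x ∂(volume : Measure ℝ), ∀ a b : ℝ, a < b → x ∈ Set.Icc a b →
    intervalAvg w a b ≤ C * w x

/-- `w ∈ A_1(ℝ)`. -/
def MemA1 (w : ℝ → ℝ) : Prop := ∃ C > (0:ℝ), A1With w C

/-- `w ∈ RH_s(ℝ)`: the reverse Hölder class of exponent `s`. -/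
def MemRH (s : ℝ) (w : ℝ → ℝ) : Prop :=
  ∃ C > (0:ℝ), ∀ a b : ℝ, a < b →
    (intervalAvg (fun x => w x ^ s) a b) ^ (1 / s) ≤ C * intervalAvg w a b

/-- `w ∈ A_∞(ℝ) = ⋃_{p ≥ 1} A_p(ℝ)`. -/
def MemAinf (w : ℝ → ℝ) : Prop := MemA1 w ∨ ∃ p > (1:ℝ), ∃ C > (0:ℝ), ApWith p w C

lemma avg_ge_of_ae (w : ℝ → ℝ) (a b c : ℝ) (hab : a < b)
    (hint : IntegrableOn w (Set.Ioc a b))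
    (h : ∀ᵐ x ∂(volume.restrict (Set.Ioc a b)), c ≤ w x) :
    c ≤ intervalAvg w a b := by
  have hba : (0:ℝ) < b - a := by linarith
  rw [intervalAvg, le_div_iff₀ hba]
  rw [intervalIntegral.integral_of_le hab.le]
  have hconst : ∫ _ in Set.Ioc a b, c ∂(volume : Measure ℝ) = c * (b - a) := by
    simp [Real.volume_Ioc, ENNReal.toReal_ofReal hba.le, mul_comm, hab.le]
  calc c * (b - a) = ∫ _ in Set.Ioc a b, c ∂(volume : Measure ℝ) := hconst.symm
    _ ≤ ∫ x in Set.Ioc a b, w x := by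
        refine integral_mono_ae ((integrableOn_const_iff).2 ?_) hint h
        right; simp [Real.volume_Ioc]

lemma avg_nonneg (w : ℝ → ℝ) (hw : ∀ x, 0 ≤ w x) (a b : ℝ) (hab : a < b) :
    0 ≤ intervalAvg w a b := by
  have : 0 ≤ ∫ x in a..b, w x :=
    intervalIntegral.integral_nonneg hab.le (fun x _ => hw x)
  exact div_nonneg this (by linarith)

/-- if `w ∈ A_1` and `w^s ∈ A_1` (`s > 1`) then `w ∈ RH_s`; conversely, if
`w ∈ A_1 ∩ RH_s` for some `s > 1` then `w^s ∈ A_∞`. -/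
theorem A1_power_reverse_holder (w : ℝ → ℝ) (hw : ∀ x, 0 < w x)
    (hloc : MeasureTheory.LocallyIntegrable w) (s : ℝ) (hs : 1 < s) :
    ((MemA1 w ∧ MemA1 (fun x => w x ^ s)) → MemRH s w) ∧
    ((MemA1 w ∧ MemRH s w) → MemAinf (fun x => w x ^ s)) := by
  have hs0 : (0:ℝ) < s := by linarith
  have hsne : s ≠ 0 := ne_of_gt hs0
  constructor
  · rintro ⟨_, C, hCpos, hC⟩
    refine ⟨C ^ (1/s), Real.rpow_pos_of_pos hCpos _, fun a b hab => ?_⟩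
    set A := intervalAvg (fun x => w x ^ s) a b with hA
    have hA0 : 0 ≤ A :=
      avg_nonneg _ (fun x => Real.rpow_nonneg (hw x).le s) a b hab
    have hint : IntegrableOn w (Set.Ioc a b) :=
      (hloc.integrableOn_isCompact isCompact_Icc).mono_set Set.Ioc_subset_Icc_self
    have key : (A / C) ^ (1/s) ≤ intervalAvg w a b := by
      refine avg_ge_of_ae w a b _ hab hint ?_
      filter_upwards [ae_restrict_of_ae hC, ae_restrict_mem measurableSet_Ioc]
        with x hx hmem
      have h1 : A ≤ C * w x ^ s := hx a b hab ⟨hmem.1.le, hmem.2⟩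
      have h2 : A / C ≤ w x ^ s := (div_le_iff₀' hCpos).2 h1
      calc (A / C) ^ (1/s) ≤ (w x ^ s) ^ (1/s) :=
            Real.rpow_le_rpow (div_nonneg hA0 hCpos.le) h2 (by positivity)
        _ = w x := by
            rw [← Real.rpow_mul (hw x).le, mul_one_div_cancel hsne, Real.rpow_one]
    have : A ^ (1/s) / C ^ (1/s) ≤ intervalAvg w a b := by
      rwa [← Real.div_rpow hA0 hCpos.le]
    calc A ^ (1/s) = (A ^ (1/s) / C ^ (1/s)) * C ^ (1/s) := by
          field_simp
      _ ≤ intervalAvg w a b * C ^ (1/s) := by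
          exact mul_le_mul_of_nonneg_right this (by positivity)
      _ = C ^ (1/s) * intervalAvg w a b := mul_comm _ _
  · rintro ⟨⟨C1, hC1pos, hA1⟩, C2, hC2pos, hRH⟩
    left
    refine ⟨(C2 * C1) ^ s, Real.rpow_pos_of_pos (by positivity) _, ?_⟩
    filter_upwards [hA1] with x hx
    intro a b hab hmem
    set A := intervalAvg (fun x => w x ^ s) a b with hA
    have hA0 : 0 ≤ A :=
      avg_nonneg _ (fun x => Real.rpow_nonneg (hw x).le s) a b hab
    have h1 : intervalAvg w a b ≤ C1 * w x := hx a b hab hmem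
    have h2 : A ^ (1/s) ≤ C2 * (C1 * w x) :=
      (hRH a b hab).trans (mul_le_mul_of_nonneg_left h1 hC2pos.le)
    have h3 : (A ^ (1/s)) ^ s ≤ (C2 * (C1 * w x)) ^ s :=
      Real.rpow_le_rpow (Real.rpow_nonneg hA0 _) h2 hs0.le
    have hl : (A ^ (1/s)) ^ s = A := by
      rw [← Real.rpow_mul hA0, one_div_mul_cancel hsne, Real.rpow_one]
    have hr : (C2 * (C1 * w x)) ^ s = (C2 * C1) ^ s * w x ^ s := by
      rw [← mul_assoc, Real.mul_rpow (by positivity) (hw x).le]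
    rw [hl, hr] at h3
    exact h3
end

section
/- Let (a_j)_{j≥0} ⊂ (0,∞) be increasing with a_j − a_{j−1} → ∞, and suppose the Littlewood–Paley square function S^{𝓘_a} associated to the partition 𝓘_a := {(−a_0,a_0)} ∪ {±[a_{j−1}, a_j)}_{j≥1} is bounded on L^{p'}(ℝ) for some p > 2 with 1/p + 1/p' = 1. Then there is a constant C_p > 0 such that a_k^{2/p'} ≤ C_p Σ_{j=1}^{k} (a_j − a_{j−1})^{2/p'} for all k ≥ 1 (with a_0 counted as a_0 − 0). -/
open MeasureTheory Filter

/-- The partial Fourier integral operator `S_{[c,d]} f(x) = ∫_c^d f̂(ξ) e^{2πiξx} dξ`. -/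
noncomputable def SIf (f : ℝ → ℂ) (c d x : ℝ) : ℂ :=
  ∫ ξ in c..d, FourierTransform.fourier f ξ * Complex.exp (2 * Real.pi * Complex.I * ξ * x)

/-- The Littlewood–Paley square function associated to the partition
`𝓘_a = {(-a₀,a₀)} ∪ {±[a_{j-1}, a_j)}_{j≥1}` of `ℝ`. -/
noncomputable def sqFn (a : ℕ → ℝ) (f : ℝ → ℂ) (x : ℝ) : ℝ :=
  Real.sqrt (‖SIf f (-(a 0)) (a 0) x‖ ^ 2 +
    ∑' j : ℕ, (‖SIf f (a j) (a (j + 1)) x‖ ^ 2 + ‖SIf f (-(a (j + 1))) (-(a j)) x‖ ^ 2))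

open Real Complex

noncomputable section



lemma gauss_poly_bound (b : ℝ) (hb : 0 < b) (m : ℕ) (x : ℝ) :
    |x| ^ m * Real.exp (-(b * x ^ 2)) ≤ 1 + (m.factorial : ℝ) / b ^ m := by
  have hx2 : (0:ℝ) ≤ b * x ^ 2 := by positivity
  have key : (b * x ^ 2) ^ m / (m.factorial : ℝ) ≤ Real.exp (b * x ^ 2) :=
    Real.pow_div_factorial_le_exp _ hx2 m
  have hfac : (0:ℝ) < (m.factorial : ℝ) := by exact_mod_cast m.factorial_pos
  have h1 : (x ^ 2) ^ m * Real.exp (-(b * x ^ 2)) ≤ (m.factorial : ℝ) / b ^ m := by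
    have h2 : (x ^ 2) ^ m ≤ (m.factorial : ℝ) / b ^ m * Real.exp (b * x ^ 2) := by
      have h3 : (b * x ^ 2) ^ m ≤ (m.factorial : ℝ) * Real.exp (b * x ^ 2) := by
        rw [div_le_iff₀ hfac] at key; linarith
      have h4 : (x ^ 2) ^ m = (b * x ^ 2) ^ m / b ^ m := by
        rw [mul_pow]; field_simp
      rw [h4, div_le_iff₀ (by positivity : (0:ℝ) < b ^ m)]
      calc (b * x ^ 2) ^ m ≤ (m.factorial : ℝ) * Real.exp (b * x ^ 2) := h3
        _ = (m.factorial : ℝ) / b ^ m * Real.exp (b * x ^ 2) * b ^ m := by field_simp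
    calc (x ^ 2) ^ m * Real.exp (-(b * x ^ 2))
        ≤ ((m.factorial : ℝ) / b ^ m * Real.exp (b * x ^ 2)) * Real.exp (-(b * x ^ 2)) := by
          apply mul_le_mul_of_nonneg_right h2 (Real.exp_nonneg _)
      _ = (m.factorial : ℝ) / b ^ m := by
          rw [mul_assoc, ← Real.exp_add]; simp
  rcases le_or_gt |x| 1 with hx | hx
  · have : |x| ^ m * Real.exp (-(b * x ^ 2)) ≤ 1 := by
      have h5 : |x| ^ m ≤ 1 := pow_le_one₀ (abs_nonneg x) hx
      have h6 : Real.exp (-(b * x ^ 2)) ≤ 1 := Real.exp_le_one_iff.mpr (by linarith)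
      calc |x| ^ m * Real.exp (-(b * x ^ 2)) ≤ 1 * 1 :=
        mul_le_mul h5 h6 (Real.exp_nonneg _) zero_le_one
      _ = 1 := by ring
    have : (0:ℝ) ≤ (m.factorial : ℝ) / b ^ m := by positivity
    linarith
  · have h5 : |x| ^ m ≤ (x ^ 2) ^ m := by
      apply pow_le_pow_left₀ (abs_nonneg x)
      nlinarith [abs_nonneg x, _root_.sq_abs x]
    have : |x| ^ m * Real.exp (-(b * x ^ 2)) ≤ (m.factorial : ℝ) / b ^ m :=
      le_trans (mul_le_mul_of_nonneg_right h5 (Real.exp_nonneg _)) h1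
    linarith

lemma gauss_contDiff (b : ℝ) :
    ContDiff ℝ ⊤ (fun x : ℝ => Complex.exp (-(b:ℂ) * (x:ℂ) ^ 2)) := by
  apply ContDiff.cexp
  exact ContDiff.mul contDiff_const (ContDiff.pow Complex.ofRealCLM.contDiff 2)

lemma gauss_iteratedDeriv (b : ℝ) (n : ℕ) :
    ∃ P : Polynomial ℂ, ∀ x : ℝ,
      iteratedDeriv n (fun y : ℝ => Complex.exp (-(b:ℂ) * (y:ℂ) ^ 2)) x
        = P.eval (x:ℂ) * Complex.exp (-(b:ℂ) * (x:ℂ) ^ 2) := by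
  induction n with
  | zero => exact ⟨1, by simp⟩
  | succ n ih =>
    obtain ⟨P, hP⟩ := ih
    refine ⟨Polynomial.derivative P + Polynomial.C (-(b:ℂ) * 2) * (Polynomial.X * P), ?_⟩
    intro x
    rw [iteratedDeriv_succ]
    have hfun : iteratedDeriv n (fun y : ℝ => Complex.exp (-(b:ℂ) * (y:ℂ) ^ 2))
        = fun y : ℝ => P.eval (y:ℂ) * Complex.exp (-(b:ℂ) * (y:ℂ) ^ 2) := funext hP
    rw [hfun]
    have h2 : HasDerivAt (fun z : ℂ => -(b:ℂ) * z ^ 2) (-(b:ℂ) * (2 * (x:ℂ))) (x:ℂ) := by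
      simpa [mul_comm] using (hasDerivAt_pow 2 (x:ℂ)).const_mul (-(b:ℂ))
    have hz : HasDerivAt (fun z : ℂ => P.eval z * Complex.exp (-(b:ℂ) * z ^ 2))
        ((Polynomial.derivative P).eval (x:ℂ) * Complex.exp (-(b:ℂ) * (x:ℂ) ^ 2)
          + P.eval (x:ℂ) * (Complex.exp (-(b:ℂ) * (x:ℂ) ^ 2) * (-(b:ℂ) * (2 * (x:ℂ))))) (x:ℂ) :=
      (P.hasDerivAt (x:ℂ)).mul h2.cexp
    rw [(hz.comp_ofReal).deriv]
    simp only [Polynomial.eval_add, Polynomial.eval_mul, Polynomial.eval_C, Polynomial.eval_X]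
    ring

def gaussianSchwartz (b : ℝ) (hb : 0 < b) : SchwartzMap ℝ ℂ where
  toFun := fun x : ℝ => Complex.exp (-(b:ℂ) * (x:ℂ) ^ 2)
  smooth' := by exact (gauss_contDiff b).of_le le_top
  decay' := by
    intro k n
    obtain ⟨P, hP⟩ := gauss_iteratedDeriv b n
    refine ⟨∑ i ∈ Finset.range (P.natDegree + 1),
      ‖P.coeff i‖ * (1 + ((k + i).factorial : ℝ) / b ^ (k + i)), fun x => ?_⟩
    rw [norm_iteratedFDeriv_eq_norm_iteratedDeriv, hP x]
    have hnorm : ‖Complex.exp (-(b:ℂ) * (x:ℂ) ^ 2)‖ = Real.exp (-(b * x ^ 2)) := by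
      rw [Complex.norm_exp]
      congr 1
      have : -(b:ℂ) * (x:ℂ) ^ 2 = ((-(b * x ^ 2) : ℝ) : ℂ) := by push_cast; ring
      rw [this, Complex.ofReal_re]
    have hPev : ‖P.eval (x:ℂ)‖ ≤ ∑ i ∈ Finset.range (P.natDegree + 1), ‖P.coeff i‖ * |x| ^ i := by
      rw [Polynomial.eval_eq_sum_range]
      refine le_trans (norm_sum_le _ _) (Finset.sum_le_sum fun i _ => ?_)
      rw [norm_mul, norm_pow, Complex.norm_real, Real.norm_eq_abs]
    calc ‖x‖ ^ k * ‖P.eval (x:ℂ) * Complex.exp (-(b:ℂ) * (x:ℂ) ^ 2)‖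
        = ‖P.eval (x:ℂ)‖ * (|x| ^ k * Real.exp (-(b * x ^ 2))) := by
          rw [norm_mul, hnorm, Real.norm_eq_abs]; ring
      _ ≤ (∑ i ∈ Finset.range (P.natDegree + 1), ‖P.coeff i‖ * |x| ^ i)
            * (|x| ^ k * Real.exp (-(b * x ^ 2))) := by
          apply mul_le_mul_of_nonneg_right hPev (by positivity)
      _ = ∑ i ∈ Finset.range (P.natDegree + 1),
            ‖P.coeff i‖ * (|x| ^ (k + i) * Real.exp (-(b * x ^ 2))) := by
          rw [Finset.sum_mul]
          refine Finset.sum_congr rfl fun i _ => ?_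
          rw [pow_add]; ring
      _ ≤ ∑ i ∈ Finset.range (P.natDegree + 1),
            ‖P.coeff i‖ * (1 + ((k + i).factorial : ℝ) / b ^ (k + i)) := by
          refine Finset.sum_le_sum fun i _ => ?_
          exact mul_le_mul_of_nonneg_left (gauss_poly_bound b hb (k + i) x) (norm_nonneg _)

lemma gaussianSchwartz_apply (b : ℝ) (hb : 0 < b) (x : ℝ) :
    gaussianSchwartz b hb x = Complex.exp (-(b:ℂ) * (x:ℂ) ^ 2) := rfl





/-- modulated gaussian bump, "center" `-c`, width `w` -/
def gb (c w : ℝ) (x : ℝ) : ℂ :=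
  (w:ℂ) * Complex.exp (-(π:ℂ) * (w:ℂ) ^ 2 * (x:ℂ) ^ 2 + 2 * (π:ℂ) * (Complex.I * (c:ℂ)) * (x:ℂ))

lemma cpow_sq_half (w : ℝ) (hw : 0 < w) : ((w:ℂ) ^ 2) ^ (1/2 : ℂ) = (w:ℂ) := by
  have h1 : ((w:ℂ) ^ 2) = (((w ^ 2 : ℝ)) : ℂ) := by push_cast; ring
  have h2 : ((1/2 : ℂ)) = (((1/2 : ℝ)) : ℂ) := by norm_num
  rw [h1, h2, ← Complex.ofReal_cpow (sq_nonneg w)]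
  rw [← Real.sqrt_eq_rpow, Real.sqrt_sq hw.le]

lemma norm_gb (c w : ℝ) (hw : 0 < w) (x : ℝ) :
    ‖gb c w x‖ = w * Real.exp (-(π * w ^ 2) * x ^ 2) := by
  rw [gb, norm_mul, Complex.norm_exp]
  rw [Complex.norm_real, Real.norm_eq_abs, abs_of_pos hw]
  congr 1
  simp only [Complex.add_re, Complex.mul_re, Complex.mul_im, Complex.I_re, Complex.I_im,
    ← Complex.ofReal_pow, Complex.ofReal_re, Complex.ofReal_im, Complex.neg_re,
    Complex.im_ofNat, Complex.re_ofNat]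
  ring_nf

/-- key integral: `∫ w e^{-π w² x² + 2π i γ x} dx = e^{-π γ²/w²}` -/
lemma key_int (w γ : ℝ) (hw : 0 < w) :
    ∫ x : ℝ, (w:ℂ) * Complex.exp (-(π:ℂ) * (w:ℂ) ^ 2 * (x:ℂ) ^ 2
        + 2 * (π:ℂ) * (Complex.I * (γ:ℂ)) * (x:ℂ))
      = ((Real.exp (-(π / w ^ 2) * γ ^ 2) : ℝ) : ℂ) := by
  have hb : (0:ℝ) < ((w:ℂ) ^ 2).re := by
    have : ((w:ℂ) ^ 2).re = w ^ 2 := by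
      have : ((w:ℂ) ^ 2) = (((w ^ 2 : ℝ)) : ℂ) := by push_cast; ring
      rw [this, Complex.ofReal_re]
    rw [this]; positivity
  have h := congrFun (fourier_gaussian_pi' hb (Complex.I * (γ:ℂ))) 0
  rw [Real.fourier_real_eq_integral_exp_smul] at h
  simp only [mul_zero, zero_mul, neg_zero, Complex.ofReal_zero, zero_mul,
    Complex.exp_zero, one_smul] at h
  rw [MeasureTheory.integral_const_mul, h, cpow_sq_half w hw]
  have hI : ((0:ℂ) + Complex.I * (Complex.I * (γ:ℂ))) ^ 2 = ((γ:ℂ)) ^ 2 := by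
    rw [zero_add, ← mul_assoc, Complex.I_mul_I]; ring
  rw [hI]
  rw [Complex.ofReal_exp]
  have : -(π:ℂ) / (w:ℂ) ^ 2 * (γ:ℂ) ^ 2 = ((-(π / w ^ 2) * γ ^ 2 : ℝ) : ℂ) := by
    push_cast; ring
  rw [this]
  have hw' : (w:ℂ) ≠ 0 := Complex.ofReal_ne_zero.mpr hw.ne'
  rw [← mul_assoc, mul_one_div, div_self hw', one_mul]











lemma norm_phase (t : ℝ) : ‖Complex.exp ((t:ℂ) * Complex.I)‖ = 1 := by
  rw [Complex.norm_exp]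
  simp [Complex.mul_re]

lemma phase_eq (ξ x : ℝ) :
    Complex.exp (2 * (π:ℂ) * Complex.I * (ξ:ℂ) * (x:ℂ))
      = Complex.exp (((2 * π * ξ * x : ℝ) : ℂ) * Complex.I) := by
  congr 1; push_cast; ring

lemma continuous_gb (c w : ℝ) : Continuous (gb c w) := by
  apply continuous_const.mul
  apply Complex.continuous_exp.comp
  fun_prop

lemma integrable_gb (c w : ℝ) (hw : 0 < w) : Integrable (gb c w) := by
  apply Integrable.mono' ((integrable_exp_neg_mul_sq (by positivity : (0:ℝ) < π * w ^ 2)).const_mul w)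
  · exact (continuous_gb c w).aestronglyMeasurable
  · refine Filter.Eventually.of_forall fun x => ?_
    rw [norm_gb c w hw x]

/-- The key lower bound: pairing a bump against the partial Fourier integral of `F`. -/
lemma key_lower (A : ℝ) (hA : 0 < A) (F : ℝ → ℂ)
    (hF : ∀ ξ : ℝ, FourierTransform.fourier F ξ = ((Real.exp (-(π / A ^ 2) * ξ ^ 2) : ℝ) : ℂ))
    (l r c w : ℝ) (hw : 0 < w) (hlr : l < r)
    (hgeo : ∀ ξ ∈ Set.Ioc l r, (ξ + c) ^ 2 ≤ w ^ 2 ∧ ξ ^ 2 ≤ A ^ 2) :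
    ENNReal.ofReal (Real.exp (-(2 * π)) * (r - l)) ≤
      ∫⁻ x : ℝ, (‖gb c w x‖₊ : ENNReal) * (‖SIf F l r x‖₊ : ENNReal) := by
  set ρ : ℝ → ℝ := fun ξ => Real.exp (-(π / A ^ 2) * ξ ^ 2) with hρ
  have hρcont : Continuous ρ := by fun_prop
  have hρpos : ∀ ξ, 0 < ρ ξ := fun ξ => Real.exp_pos _
  -- rewrite SIf
  have hS : ∀ x, SIf F l r x
      = ∫ ξ in Set.Ioc l r, (ρ ξ : ℂ) * Complex.exp (2 * (π:ℂ) * Complex.I * (ξ:ℂ) * (x:ℂ)) := by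
    intro x
    rw [SIf, intervalIntegral.integral_of_le hlr.le]
    apply setIntegral_congr_fun measurableSet_Ioc
    intro ξ _
    simp only [hF]; rfl
  -- the pairing
  set Q : ℂ := ∫ x : ℝ, gb c w x * SIf F l r x with hQ
  -- Fubini
  have hmerge : ∀ ξ x : ℝ, gb c w x * ((ρ ξ : ℂ) * Complex.exp (2 * (π:ℂ) * Complex.I * (ξ:ℂ) * (x:ℂ)))
      = (ρ ξ : ℂ) * ((w:ℂ) * Complex.exp (-(π:ℂ) * (w:ℂ) ^ 2 * (x:ℂ) ^ 2
          + 2 * (π:ℂ) * (Complex.I * ((c + ξ : ℝ):ℂ)) * (x:ℂ))) := by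
    intro ξ x
    have e3 : Complex.exp (-(π:ℂ) * (w:ℂ) ^ 2 * (x:ℂ) ^ 2 + 2 * (π:ℂ) * (Complex.I * (c:ℂ)) * (x:ℂ))
        * Complex.exp (2 * (π:ℂ) * Complex.I * (ξ:ℂ) * (x:ℂ))
        = Complex.exp (-(π:ℂ) * (w:ℂ) ^ 2 * (x:ℂ) ^ 2
            + 2 * (π:ℂ) * (Complex.I * ((c + ξ : ℝ):ℂ)) * (x:ℂ)) := by
      rw [← Complex.exp_add]; congr 1; push_cast; ring
    calc gb c w x * ((ρ ξ : ℂ) * Complex.exp (2 * (π:ℂ) * Complex.I * (ξ:ℂ) * (x:ℂ)))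
        = (ρ ξ : ℂ) * ((w:ℂ) * (Complex.exp (-(π:ℂ) * (w:ℂ) ^ 2 * (x:ℂ) ^ 2
            + 2 * (π:ℂ) * (Complex.I * (c:ℂ)) * (x:ℂ))
          * Complex.exp (2 * (π:ℂ) * Complex.I * (ξ:ℂ) * (x:ℂ)))) := by rw [gb]; ring
      _ = _ := by rw [e3]
  have hint_f : Integrable (Function.uncurry fun x ξ =>
      gb c w x * ((ρ ξ : ℂ) * Complex.exp (2 * (π:ℂ) * Complex.I * (ξ:ℂ) * (x:ℂ))))
      (volume.prod (volume.restrict (Set.Ioc l r))) := by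
    apply Integrable.mono' ((integrable_gb c w hw).norm.mul_prod (hρcont.integrableOn_Ioc))
    · apply Continuous.aestronglyMeasurable
      apply Continuous.mul
      · exact (continuous_gb c w).comp continuous_fst
      · apply Continuous.mul
        · exact Complex.continuous_ofReal.comp (hρcont.comp continuous_snd)
        · apply Complex.continuous_exp.comp
          fun_prop
    · refine Filter.Eventually.of_forall fun z => ?_
      rw [Function.uncurry]
      rw [norm_mul, norm_mul, phase_eq, norm_phase]
      simp [Real.norm_eq_abs, abs_of_pos (hρpos z.2)]
  have hswap : Q = ∫ ξ in Set.Ioc l r, ∫ x : ℝ,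
      gb c w x * ((ρ ξ : ℂ) * Complex.exp (2 * (π:ℂ) * Complex.I * (ξ:ℂ) * (x:ℂ))) := by
    rw [hQ]
    have : ∀ x, gb c w x * SIf F l r x = ∫ ξ in Set.Ioc l r,
        gb c w x * ((ρ ξ : ℂ) * Complex.exp (2 * (π:ℂ) * Complex.I * (ξ:ℂ) * (x:ℂ))) := by
      intro x
      rw [hS x, ← integral_const_mul]
    simp_rw [this]
    exact integral_integral_swap hint_f
  have hinner : ∀ ξ : ℝ, (∫ x : ℝ,
      gb c w x * ((ρ ξ : ℂ) * Complex.exp (2 * (π:ℂ) * Complex.I * (ξ:ℂ) * (x:ℂ))))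
      = ((ρ ξ * Real.exp (-(π / w ^ 2) * (c + ξ) ^ 2) : ℝ) : ℂ) := by
    intro ξ
    simp_rw [hmerge ξ]
    rw [integral_const_mul, key_int w (c + ξ) hw, ← Complex.ofReal_mul]
  have hQval : Q = ((∫ ξ in Set.Ioc l r, ρ ξ * Real.exp (-(π / w ^ 2) * (c + ξ) ^ 2) : ℝ) : ℂ) := by
    rw [hswap]
    simp_rw [hinner]
    exact integral_ofReal
  -- lower bound for the real integral
  have hlow : Real.exp (-(2 * π)) * (r - l)
      ≤ ∫ ξ in Set.Ioc l r, ρ ξ * Real.exp (-(π / w ^ 2) * (c + ξ) ^ 2) := by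
    have h1 : Real.exp (-(2 * π)) * (volume (Set.Ioc l r)).toReal
        ≤ ∫ ξ in Set.Ioc l r, ρ ξ * Real.exp (-(π / w ^ 2) * (c + ξ) ^ 2) := by
      apply setIntegral_ge_of_const_le_real measurableSet_Ioc
      · exact (measure_Ioc_lt_top).ne
      · intro ξ hξ
        obtain ⟨hg1, hg2⟩ := hgeo ξ hξ
        have hpi := Real.pi_pos
        have e1 : Real.exp (-π) ≤ ρ ξ := by
          apply Real.exp_le_exp.mpr
          have h2 : π / A ^ 2 * ξ ^ 2 ≤ π := by
            rw [div_mul_eq_mul_div, div_le_iff₀ (by positivity)]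
            nlinarith
          nlinarith
        have e2 : Real.exp (-π) ≤ Real.exp (-(π / w ^ 2) * (c + ξ) ^ 2) := by
          apply Real.exp_le_exp.mpr
          have hcs : (c + ξ) ^ 2 ≤ w ^ 2 := by nlinarith
          have h2 : π / w ^ 2 * (c + ξ) ^ 2 ≤ π := by
            rw [div_mul_eq_mul_div, div_le_iff₀ (by positivity)]
            nlinarith
          nlinarith
        have e3 : Real.exp (-(2 * π)) = Real.exp (-π) * Real.exp (-π) := by
          rw [← Real.exp_add]; ring_nf
        rw [e3]
        exact mul_le_mul e1 e2 (Real.exp_nonneg _) (hρpos ξ).le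
      · exact ((hρcont.mul (by fun_prop)).integrableOn_Ioc)
    rw [Real.volume_Ioc, ENNReal.toReal_ofReal (by linarith)] at h1
    exact h1
  calc ENNReal.ofReal (Real.exp (-(2 * π)) * (r - l))
      ≤ ENNReal.ofReal (∫ ξ in Set.Ioc l r, ρ ξ * Real.exp (-(π / w ^ 2) * (c + ξ) ^ 2)) :=
        ENNReal.ofReal_le_ofReal hlow
    _ ≤ (‖Q‖₊ : ENNReal) := by
        rw [← enorm_eq_nnnorm, ← ofReal_norm]
        apply ENNReal.ofReal_le_ofReal
        rw [hQval, Complex.norm_real, Real.norm_eq_abs]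
        exact le_abs_self _
    _ ≤ ∫⁻ x : ℝ, (‖gb c w x * SIf F l r x‖₊ : ENNReal) :=
        enorm_integral_le_lintegral_enorm _
    _ = ∫⁻ x : ℝ, (‖gb c w x‖₊ : ENNReal) * (‖SIf F l r x‖₊ : ENNReal) := by
        apply lintegral_congr
        intro x
        rw [nnnorm_mul, ENNReal.coe_mul]






/-- continuity of partial Fourier integrals, given an explicit continuous transform -/
lemma SIf_continuous (F : ℝ → ℂ) (ρ : ℝ → ℝ) (hρc : Continuous ρ)
    (hF : ∀ ξ : ℝ, FourierTransform.fourier F ξ = ((ρ ξ : ℝ) : ℂ)) (l r : ℝ) :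
    Continuous (fun x => SIf F l r x) := by
  have : (fun x => SIf F l r x)
      = fun x : ℝ => ∫ ξ in l..r, ((ρ ξ : ℝ) : ℂ) * Complex.exp (2 * (π:ℂ) * Complex.I * (ξ:ℂ) * ((x:ℝ):ℂ)) := by
    funext x
    apply intervalIntegral.integral_congr
    intro ξ _
    simp only [hF]
  rw [this]
  apply intervalIntegral.continuous_parametric_intervalIntegral_of_continuous'
  apply Continuous.mul
  · exact Complex.continuous_ofReal.comp (hρc.comp continuous_snd)
  · apply Complex.continuous_exp.comp
    fun_prop

lemma SIf_norm_le (F : ℝ → ℂ) (ρ : ℝ → ℝ) (hρnn : ∀ ξ, 0 ≤ ρ ξ)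
    (hF : ∀ ξ : ℝ, FourierTransform.fourier F ξ = ((ρ ξ : ℝ) : ℂ)) {l r : ℝ} (hlr : l ≤ r) (x : ℝ) :
    ‖SIf F l r x‖ ≤ ∫ ξ in l..r, ρ ξ := by
  rw [SIf]
  refine le_trans (intervalIntegral.norm_integral_le_integral_norm hlr) ?_
  apply le_of_eq
  apply intervalIntegral.integral_congr
  intro ξ _
  simp only [hF, norm_mul]
  have h1 : ‖Complex.exp (2 * (π:ℂ) * Complex.I * (ξ:ℂ) * (x:ℂ))‖ = 1 := by
    have : 2 * (π:ℂ) * Complex.I * (ξ:ℂ) * (x:ℂ) = ((2 * π * ξ * x : ℝ) : ℂ) * Complex.I := by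
      push_cast; ring
    rw [this, Complex.norm_exp]
    simp [Complex.mul_re]
  rw [h1, mul_one, Complex.norm_real, Real.norm_eq_abs, _root_.abs_of_nonneg (hρnn ξ)]

lemma summable_sq (F : ℝ → ℂ) (ρ : ℝ → ℝ) (hρc : Continuous ρ) (hρnn : ∀ ξ, 0 ≤ ρ ξ)
    (hρi : Integrable ρ)
    (hF : ∀ ξ : ℝ, FourierTransform.fourier F ξ = ((ρ ξ : ℝ) : ℂ))
    (a : ℕ → ℝ) (hmono : Monotone a) (x : ℝ) :
    Summable (fun j : ℕ => ‖SIf F (a j) (a (j + 1)) x‖ ^ 2 + ‖SIf F (-(a (j + 1))) (-(a j)) x‖ ^ 2) := by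
  set It : ℝ := ∫ ξ : ℝ, ρ ξ with hIt
  have hItnn : 0 ≤ It := integral_nonneg hρnn
  set t : ℕ → ℝ := fun j => ∫ ξ in (a j)..(a (j + 1)), ρ ξ with ht
  set s : ℕ → ℝ := fun j => ∫ ξ in (-(a (j + 1)))..(-(a j)), ρ ξ with hs
  have hstep : ∀ j : ℕ, a j ≤ a (j + 1) := fun j => hmono (Nat.le_succ j)
  have htnn : ∀ j, 0 ≤ t j := fun j =>
    intervalIntegral.integral_nonneg (hstep j) (fun ξ _ => hρnn ξ)
  have hsnn : ∀ j, 0 ≤ s j := fun j =>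
    intervalIntegral.integral_nonneg (by linarith [hstep j]) (fun ξ _ => hρnn ξ)
  have hIoc_le : ∀ l r : ℝ, l ≤ r → (∫ ξ in l..r, ρ ξ) ≤ It := by
    intro l r hlr
    rw [intervalIntegral.integral_of_le hlr]
    exact setIntegral_le_integral hρi (Filter.Eventually.of_forall hρnn)
  have htI : ∀ j, t j ≤ It := fun j => hIoc_le _ _ (hstep j)
  have hsI : ∀ j, s j ≤ It := fun j => hIoc_le _ _ (by linarith [hstep j])
  have hterm : ∀ j, ‖SIf F (a j) (a (j + 1)) x‖ ^ 2 + ‖SIf F (-(a (j + 1))) (-(a j)) x‖ ^ 2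
      ≤ It * t j + It * s j := by
    intro j
    have h1 : ‖SIf F (a j) (a (j + 1)) x‖ ≤ t j := SIf_norm_le F ρ hρnn hF (hstep j) x
    have h2 : ‖SIf F (-(a (j + 1))) (-(a j)) x‖ ≤ s j := SIf_norm_le F ρ hρnn hF (by linarith [hstep j]) x
    have h3 : ‖SIf F (a j) (a (j + 1)) x‖ ^ 2 ≤ t j * t j := by
      nlinarith [norm_nonneg (SIf F (a j) (a (j + 1)) x)]
    have h4 : ‖SIf F (-(a (j + 1))) (-(a j)) x‖ ^ 2 ≤ s j * s j := by
      nlinarith [norm_nonneg (SIf F (-(a (j + 1))) (-(a j)) x)]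
    have h5 : t j * t j ≤ It * t j := mul_le_mul_of_nonneg_right (htI j) (htnn j)
    have h6 : s j * s j ≤ It * s j := mul_le_mul_of_nonneg_right (hsI j) (hsnn j)
    linarith
  apply summable_of_sum_range_le (c := It * It + It * It)
  · intro j; positivity
  · intro n
    have hsum_t : ∑ j ∈ Finset.range n, t j ≤ It := by
      rw [ht]
      rw [intervalIntegral.sum_integral_adjacent_intervals (fun j _ => hρi.intervalIntegrable)]
      exact hIoc_le _ _ (hmono (Nat.zero_le n))
    have hsum_s : ∑ j ∈ Finset.range n, s j ≤ It := by
      have hcomp : ∀ j : ℕ, s j = ∫ ξ in (a j)..(a (j + 1)), ρ (-ξ) := by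
        intro j
        rw [hs]
        exact (intervalIntegral.integral_comp_neg (a := a j) (b := a (j+1)) fun ξ => ρ ξ).symm
      simp_rw [hcomp]
      have hρi' : Integrable (fun ξ => ρ (-ξ)) := hρi.comp_neg
      rw [intervalIntegral.sum_integral_adjacent_intervals (fun j _ => hρi'.intervalIntegrable)]
      rw [intervalIntegral.integral_comp_neg (fun ξ => ρ ξ)]
      have := hIoc_le (-(a n)) (-(a 0)) (by linarith [hmono (Nat.zero_le n)])
      exact this
    calc ∑ j ∈ Finset.range n, (‖SIf F (a j) (a (j + 1)) x‖ ^ 2 + ‖SIf F (-(a (j + 1))) (-(a j)) x‖ ^ 2)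
        ≤ ∑ j ∈ Finset.range n, (It * t j + It * s j) := Finset.sum_le_sum fun j _ => hterm j
      _ = It * (∑ j ∈ Finset.range n, t j) + It * (∑ j ∈ Finset.range n, s j) := by
          rw [Finset.sum_add_distrib, ← Finset.mul_sum, ← Finset.mul_sum]
      _ ≤ It * It + It * It := by
          have := mul_le_mul_of_nonneg_left hsum_t hItnn
          have := mul_le_mul_of_nonneg_left hsum_s hItnn
          linarith

lemma gauss_lint (am β q : ℝ) (ham : 0 < am) (hβ : 0 < β) (hq : 1 ≤ q) :
    ∫⁻ x : ℝ, (ENNReal.ofReal (am * Real.exp (-(π * β ^ 2) * x ^ 2))) ^ q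
      ≤ ENNReal.ofReal (am ^ q / β) := by
  have hqpos : 0 < q := lt_of_lt_of_le one_pos hq
  have hpt : ∀ x : ℝ, (ENNReal.ofReal (am * Real.exp (-(π * β ^ 2) * x ^ 2))) ^ q
      = ENNReal.ofReal (am ^ q * Real.exp (-(q * (π * β ^ 2)) * x ^ 2)) := by
    intro x
    rw [ENNReal.ofReal_rpow_of_nonneg (by positivity) hqpos.le]
    congr 1
    rw [Real.mul_rpow ham.le (Real.exp_nonneg _)]
    congr 1
    rw [Real.rpow_def_of_pos (Real.exp_pos _), Real.log_exp]
    congr 1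
    ring
  simp_rw [hpt]
  have hint : Integrable (fun x : ℝ => am ^ q * Real.exp (-(q * (π * β ^ 2)) * x ^ 2)) :=
    (integrable_exp_neg_mul_sq (by positivity)).const_mul _
  rw [← ofReal_integral_eq_lintegral_ofReal hint
    (Filter.Eventually.of_forall fun x => by positivity)]
  apply ENNReal.ofReal_le_ofReal
  rw [integral_const_mul, integral_gaussian]
  rw [div_eq_mul_inv (am ^ q) β]
  apply mul_le_mul_of_nonneg_left _ (Real.rpow_nonneg ham.le q)
  rw [show π / (q * (π * β ^ 2)) = 1 / (q * β ^ 2) by field_simp]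
  calc Real.sqrt (1 / (q * β ^ 2)) ≤ Real.sqrt (1 / β ^ 2) := by
        apply Real.sqrt_le_sqrt
        apply div_le_div_of_nonneg_left one_pos.le (by positivity)
        nlinarith
      _ = β⁻¹ := by
        rw [one_div, Real.sqrt_inv, Real.sqrt_sq hβ.le]

lemma lint_Lp_sum_le {ι : Type*} (s : Finset ι) (f : ι → ℝ → ENNReal)
    (hf : ∀ i, AEMeasurable (f i) (volume : Measure ℝ)) (r : ℝ) (hr : 1 ≤ r) :
    (∫⁻ x, (∑ i ∈ s, f i x) ^ r) ^ (1 / r) ≤ ∑ i ∈ s, (∫⁻ x, f i x ^ r) ^ (1 / r) := by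
  classical
  induction s using Finset.cons_induction with
  | empty =>
      simp only [Finset.sum_empty]
      rw [ENNReal.zero_rpow_of_pos (by linarith), lintegral_zero,
        ENNReal.zero_rpow_of_pos (by positivity)]
  | cons a s ha ih =>
      simp only [Finset.sum_cons]
      calc (∫⁻ x, (f a x + ∑ i ∈ s, f i x) ^ r) ^ (1 / r)
          ≤ (∫⁻ x, f a x ^ r) ^ (1 / r) + (∫⁻ x, (∑ i ∈ s, f i x) ^ r) ^ (1 / r) :=
            ENNReal.lintegral_Lp_add_le (hf a) (Finset.aemeasurable_fun_sum s fun i _ => hf i) hr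
        _ ≤ (∫⁻ x, f a x ^ r) ^ (1 / r) + ∑ i ∈ s, (∫⁻ x, f i x ^ r) ^ (1 / r) :=
            add_le_add le_rfl ih

lemma cs_sqrt {ι : Type*} (s : Finset ι) (f g : ι → ℝ) (hf : ∀ i, 0 ≤ f i) (hg : ∀ i, 0 ≤ g i) :
    ∑ i ∈ s, f i * g i ≤ Real.sqrt (∑ i ∈ s, f i ^ 2) * Real.sqrt (∑ i ∈ s, g i ^ 2) := by
  have h := Finset.sum_mul_sq_le_sq_mul_sq s f g
  have hnn : 0 ≤ ∑ i ∈ s, f i * g i :=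
    Finset.sum_nonneg fun i _ => mul_nonneg (hf i) (hg i)
  calc ∑ i ∈ s, f i * g i = Real.sqrt ((∑ i ∈ s, f i * g i) ^ 2) := (Real.sqrt_sq hnn).symm
    _ ≤ Real.sqrt ((∑ i ∈ s, f i ^ 2) * ∑ i ∈ s, g i ^ 2) := Real.sqrt_le_sqrt h
    _ = _ := Real.sqrt_mul (Finset.sum_nonneg fun i _ => sq_nonneg _) _






def FSd (A : ℝ) (hA : 0 < A) : SchwartzMap ℝ ℂ :=
  (A:ℂ) • gaussianSchwartz (π * A ^ 2) (by positivity)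

lemma FSd_apply (A : ℝ) (hA : 0 < A) (x : ℝ) :
    FSd A hA x = (A:ℂ) * Complex.exp (-(π:ℂ) * (A:ℂ) ^ 2 * (x:ℂ) ^ 2) := by
  rw [FSd, SchwartzMap.smul_apply, gaussianSchwartz_apply, smul_eq_mul]
  congr 2
  push_cast; ring

lemma norm_FSd (A : ℝ) (hA : 0 < A) (x : ℝ) :
    ‖FSd A hA x‖ = A * Real.exp (-(π * A ^ 2) * x ^ 2) := by
  rw [FSd_apply A hA x, norm_mul, Complex.norm_real, Real.norm_eq_abs, abs_of_pos hA]
  congr 1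
  rw [Complex.norm_exp]
  congr 1
  have : -(π:ℂ) * (A:ℂ) ^ 2 * (x:ℂ) ^ 2 = ((-(π * A ^ 2) * x ^ 2 : ℝ) : ℂ) := by push_cast; ring
  rw [this, Complex.ofReal_re]

lemma FT_FSd (A : ℝ) (hA : 0 < A) (ξ : ℝ) :
    FourierTransform.fourier (⇑(FSd A hA)) ξ = ((Real.exp (-(π / A ^ 2) * ξ ^ 2) : ℝ) : ℂ) := by
  have hbre : (0:ℝ) < ((A:ℂ) ^ 2).re := by
    have : ((A:ℂ) ^ 2) = (((A ^ 2 : ℝ)) : ℂ) := by push_cast; ring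
    rw [this, Complex.ofReal_re]; positivity
  have hsm : ⇑(FSd A hA) = fun x : ℝ => (A:ℂ) * Complex.exp (-(π:ℂ) * (A:ℂ) ^ 2 * ((x:ℝ):ℂ) ^ 2) :=
    funext fun x => FSd_apply A hA x
  rw [Real.fourier_real_eq_integral_exp_smul, hsm]
  have h := congrFun (fourier_gaussian_pi (b := ((A:ℂ) ^ 2)) hbre) ξ
  rw [Real.fourier_real_eq_integral_exp_smul] at h
  simp only [smul_eq_mul] at h ⊢
  have hre : ∀ v : ℝ, Complex.exp (((-2 * π * v * ξ : ℝ):ℂ) * Complex.I)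
      * ((A:ℂ) * Complex.exp (-(π:ℂ) * (A:ℂ) ^ 2 * ((v:ℝ):ℂ) ^ 2))
      = (A:ℂ) * (Complex.exp (((-2 * π * v * ξ : ℝ):ℂ) * Complex.I)
          * Complex.exp (-(π:ℂ) * (A:ℂ) ^ 2 * ((v:ℝ):ℂ) ^ 2)) := fun v => by ring
  simp_rw [hre]
  rw [integral_const_mul, h, cpow_sq_half A hA]
  rw [← mul_assoc, mul_one_div, div_self (Complex.ofReal_ne_zero.mpr hA.ne'), one_mul]
  rw [Complex.ofReal_exp]
  congr 1
  push_cast; ring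

lemma eLpNorm_FSd_le (A : ℝ) (hA : 0 < A) (q : ℝ) (hq : 1 ≤ q)
    (hgauss : ∫⁻ x : ℝ, (ENNReal.ofReal (A * Real.exp (-(π * A ^ 2) * x ^ 2))) ^ q
      ≤ ENNReal.ofReal (A ^ q / A)) :
    eLpNorm (⇑(FSd A hA)) (ENNReal.ofReal q) volume ≤ ENNReal.ofReal (A ^ ((q - 1) / q)) := by
  have hq0 : 0 < q := lt_of_lt_of_le one_pos hq
  rw [eLpNorm_eq_lintegral_rpow_enorm_toReal (by simp [ENNReal.ofReal_eq_zero]; linarith)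
    ENNReal.ofReal_ne_top]
  rw [ENNReal.toReal_ofReal hq0.le]
  have hpt : ∀ x : ℝ, ((‖FSd A hA x‖₊ : ENNReal)) ^ q
      = (ENNReal.ofReal (A * Real.exp (-(π * A ^ 2) * x ^ 2))) ^ q := by
    intro x
    congr 1
    rw [← enorm_eq_nnnorm, ← ofReal_norm, norm_FSd A hA x]
  calc (∫⁻ x, ((‖FSd A hA x‖₊ : ENNReal)) ^ q) ^ (1 / q)
      ≤ (ENNReal.ofReal (A ^ q / A)) ^ (1 / q) := by
        apply ENNReal.rpow_le_rpow _ (by positivity)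
        rw [lintegral_congr hpt]
        exact hgauss
    _ = ENNReal.ofReal (A ^ ((q - 1) / q)) := by
        rw [ENNReal.ofReal_rpow_of_nonneg (div_nonneg (Real.rpow_nonneg hA.le q) hA.le)
          (by positivity : (0:ℝ) ≤ 1 / q)]
        congr 1
        rw [show A ^ q / A = A ^ (q - 1) from by rw [Real.rpow_sub hA, Real.rpow_one]]
        rw [← Real.rpow_mul hA.le]
        congr 1
        ring

end

set_option maxHeartbeats 2000000 in
/-- if `(a_j)` is increasing with `a_j - a_{j-1} → ∞` and the square function
`S^{𝓘_a}` is bounded on `L^{p'}(ℝ)` for some `p > 2` (`1/p + 1/p' = 1`), then there is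
`C_p > 0` with `a_k^{2/p'} ≤ C_p ∑_{j=1}^k (a_j - a_{j-1})^{2/p'}` for all `k ≥ 1`
(with `a_0` counted as `a_0 - 0`). -/
theorem squareFunction_necessary_condition (a : ℕ → ℝ) (ha0 : 0 < a 0)
    (hmono : StrictMono a)
    (hgap : Tendsto (fun j => a (j + 1) - a j) atTop atTop)
    (p : ℝ) (hp : 2 < p) (C : ℝ)
    (hbdd : ∀ f : SchwartzMap ℝ ℂ,
      eLpNorm (sqFn a ⇑f) (ENNReal.ofReal (p / (p - 1))) volume ≤
        ENNReal.ofReal C * eLpNorm ⇑f (ENNReal.ofReal (p / (p - 1))) volume) :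
    ∃ Cp > (0:ℝ), ∀ k : ℕ, 1 ≤ k →
      a k ^ (2 * (p - 1) / p) ≤
        Cp * ((a 0) ^ (2 * (p - 1) / p) +
          ∑ j ∈ Finset.range k, (a (j + 1) - a j) ^ (2 * (p - 1) / p)) := by
  have hp0 : (0:ℝ) < p := by linarith
  have hp1 : (1:ℝ) < p := by linarith
  have hpm1 : (0:ℝ) < p - 1 := by linarith
  set p' : ℝ := p / (p - 1) with hp'def
  have hp'1 : 1 < p' := by
    rw [hp'def]
    exact (one_lt_div hpm1).mpr (by linarith)
  have hp'0 : (0:ℝ) < p' := by linarith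
  have hconj : p.HolderConjugate p' := by
    exact (Real.holderConjugate_iff_eq_conjExponent hp1).mpr hp'def
  have hexp1 : (p' - 1) / p' = 1 / p := by
    rw [hp'def]
    field_simp
    ring
  set α : ℝ := 2 * (p - 1) / p with hαdef
  have hα0 : (0:ℝ) < α := by rw [hαdef]; positivity
  have hK0 : (0:ℝ) < max C 1 := lt_of_lt_of_le one_pos (le_max_right C 1)
  refine ⟨Real.exp (4 * Real.pi) * (max C 1) ^ 2,
    mul_pos (Real.exp_pos _) (pow_pos hK0 2), ?_⟩
  intro k hk
  set A : ℝ := a k with hAdef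
  have hA : 0 < A := lt_of_lt_of_le ha0 (hmono.monotone (Nat.zero_le k))
  set Sα : ℝ := (a 0) ^ α + ∑ j ∈ Finset.range k, (a (j + 1) - a j) ^ α with hSαdef
  have haj : ∀ i : ℕ, 0 < a i := fun i => lt_of_lt_of_le ha0 (hmono.monotone (Nat.zero_le i))
  have hstep : ∀ i : ℕ, a i < a (i + 1) := fun i => hmono (Nat.lt_succ_self i)
  have hSα0 : 0 ≤ Sα := by
    rw [hSαdef]
    have h1 : (0:ℝ) ≤ (a 0) ^ α := Real.rpow_nonneg (haj 0).le α
    have h2 : (0:ℝ) ≤ ∑ j ∈ Finset.range k, (a (j + 1) - a j) ^ α :=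
      Finset.sum_nonneg fun j _ => Real.rpow_nonneg (by linarith [hstep j]) α
    linarith
  -- the test function and its Fourier transform
  have hFT : ∀ ξ : ℝ, FourierTransform.fourier (⇑(FSd A hA)) ξ
      = ((Real.exp (-(Real.pi / A ^ 2) * ξ ^ 2) : ℝ) : ℂ) := FT_FSd A hA
  set ρ : ℝ → ℝ := fun ξ => Real.exp (-(Real.pi / A ^ 2) * ξ ^ 2) with hρdef
  have hρc : Continuous ρ := by rw [hρdef]; fun_prop
  have hρnn : ∀ ξ, 0 ≤ ρ ξ := fun ξ => (Real.exp_pos _).le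
  have hρi : Integrable ρ := by
    rw [hρdef]
    have : (0:ℝ) < Real.pi / A ^ 2 := by positivity
    simpa [neg_mul] using integrable_exp_neg_mul_sq this
  -- geometric data
  set w : ℕ → ℝ := fun i => if i = k then a 0 else (a (i + 1) - a i) / 2 with hwdef
  set cc : ℕ → ℝ := fun i => if i = k then 0 else -((a i + a (i + 1)) / 2) with hccdef
  set ll : ℕ → ℝ := fun i => if i = k then -(a 0) else a i with hlldef
  set rr : ℕ → ℝ := fun i => if i = k then a 0 else a (i + 1) with hrrdef
  have hwk : w k = a 0 := by simp [hwdef]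
  have hcck : cc k = 0 := by simp [hccdef]
  have hllk : ll k = -(a 0) := by simp [hlldef]
  have hrrk : rr k = a 0 := by simp [hrrdef]
  have hwlt : ∀ i, i < k → w i = (a (i + 1) - a i) / 2 := fun i h => by
    simp [hwdef, Nat.ne_of_lt h]
  have hcclt : ∀ i, i < k → cc i = -((a i + a (i + 1)) / 2) := fun i h => by
    simp [hccdef, Nat.ne_of_lt h]
  have hlllt : ∀ i, i < k → ll i = a i := fun i h => by
    simp [hlldef, Nat.ne_of_lt h]
  have hrrlt : ∀ i, i < k → rr i = a (i + 1) := fun i h => by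
    simp [hrrdef, Nat.ne_of_lt h]
  have hwpos : ∀ i, 0 < w i := by
    intro i
    rcases eq_or_ne i k with h | h
    · subst h; rw [hwk]; exact ha0
    · rcases Nat.lt_or_ge i k with h2 | h2
      · rw [hwlt i h2]; linarith [hstep i]
      · simp only [hwdef]; rw [if_neg h]; linarith [hstep i]
  have hlr : ∀ i, ll i < rr i := by
    intro i
    rcases eq_or_ne i k with h | h
    · subst h; rw [hllk, hrrk]; linarith
    · simp only [hlldef, hrrdef]; rw [if_neg h, if_neg h]; exact hstep i
  have hgeo : ∀ i ∈ Finset.range (k + 1), ∀ ξ ∈ Set.Ioc (ll i) (rr i),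
      (ξ + cc i) ^ 2 ≤ (w i) ^ 2 ∧ ξ ^ 2 ≤ A ^ 2 := by
    intro i hi ξ hξ
    have ha0A : a 0 ≤ A := hmono.monotone (Nat.zero_le k)
    rcases eq_or_ne i k with hik | hik
    · subst hik
      rw [hllk, hrrk] at hξ
      obtain ⟨h1, h2⟩ := hξ
      rw [hwk, hcck]
      constructor
      · nlinarith
      · nlinarith
    · have hik' : i < k := lt_of_le_of_ne (Nat.lt_succ_iff.mp (Finset.mem_range.mp hi)) hik
      rw [hlllt i hik', hrrlt i hik'] at hξ
      obtain ⟨h1, h2⟩ := hξ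
      rw [hwlt i hik', hcclt i hik']
      have hup : a (i + 1) ≤ A := hmono.monotone (Nat.succ_le_of_lt hik')
      constructor
      · have hm : (0:ℝ) ≤ (ξ - a i) * (a (i + 1) - ξ) :=
          mul_nonneg (by linarith) (by linarith)
        nlinarith [hm]
      · nlinarith [haj i]
  -- abbreviations
  set G : ℕ → ℝ → ℂ := fun i x => gb (cc i) (w i) x with hGdef
  set S : ℕ → ℝ → ℂ := fun i x => SIf (⇑(FSd A hA)) (ll i) (rr i) x with hSdef
  have hGval : ∀ i x, G i x = gb (cc i) (w i) x := fun i x => rfl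
  have hSval : ∀ i x, S i x = SIf (⇑(FSd A hA)) (ll i) (rr i) x := fun i x => rfl
  set u : ℝ → ℝ := fun x => Real.sqrt (∑ i ∈ Finset.range (k + 1), ‖G i x‖ ^ 2) with hudef
  have huval : ∀ x, u x = Real.sqrt (∑ i ∈ Finset.range (k + 1), ‖G i x‖ ^ 2) := fun x => rfl
  -- Step 1: lower bound on the sum of pairings
  have h_lower_sum : ENNReal.ofReal (Real.exp (-(2 * Real.pi)) * A)
      ≤ ∑ i ∈ Finset.range (k + 1), ENNReal.ofReal (Real.exp (-(2 * Real.pi)) * (rr i - ll i)) := by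
    have hsum : ∑ i ∈ Finset.range (k + 1), (rr i - ll i) = A + a 0 := by
      rw [Finset.sum_range_succ]
      have hcong : ∀ i ∈ Finset.range k, rr i - ll i = a (i + 1) - a i := fun i hi => by
        rw [hrrlt i (Finset.mem_range.mp hi), hlllt i (Finset.mem_range.mp hi)]
      rw [Finset.sum_congr rfl hcong, Finset.sum_range_sub a k, hrrk, hllk]
      rw [hAdef]; ring
    have hreal : Real.exp (-(2 * Real.pi)) * A
        ≤ ∑ i ∈ Finset.range (k + 1), Real.exp (-(2 * Real.pi)) * (rr i - ll i) := by
      rw [← Finset.mul_sum, hsum]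
      have he := Real.exp_pos (-(2 * Real.pi))
      nlinarith
    calc ENNReal.ofReal (Real.exp (-(2 * Real.pi)) * A)
        ≤ ENNReal.ofReal (∑ i ∈ Finset.range (k + 1), Real.exp (-(2 * Real.pi)) * (rr i - ll i)) :=
          ENNReal.ofReal_le_ofReal hreal
      _ = _ := ENNReal.ofReal_sum_of_nonneg fun i hi =>
          mul_nonneg (Real.exp_nonneg _) (by linarith [hlr i])
  -- Step 2: per-interval key lower bound
  have h_sum_int : ∑ i ∈ Finset.range (k + 1), ENNReal.ofReal (Real.exp (-(2 * Real.pi)) * (rr i - ll i))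
      ≤ ∑ i ∈ Finset.range (k + 1),
          ∫⁻ x : ℝ, (‖G i x‖₊ : ENNReal) * (‖S i x‖₊ : ENNReal) :=
    Finset.sum_le_sum fun i hi =>
      key_lower A hA _ hFT (ll i) (rr i) (cc i) (w i) (hwpos i) (hlr i) (hgeo i hi)
  -- Step 3: swap sum and integral
  have hGmeas : ∀ i : ℕ, Measurable fun x => (‖G i x‖₊ : ENNReal) := fun i =>
    ((continuous_gb (cc i) (w i)).measurable.nnnorm).coe_nnreal_ennreal
  have hSIfcont : ∀ l₀ r₀ : ℝ, Continuous fun x => SIf (⇑(FSd A hA)) l₀ r₀ x :=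
    fun l₀ r₀ => SIf_continuous _ ρ hρc hFT l₀ r₀
  have hSmeas : ∀ i : ℕ, Measurable fun x => (‖S i x‖₊ : ENNReal) := fun i =>
    ((hSIfcont (ll i) (rr i)).measurable.nnnorm).coe_nnreal_ennreal
  have h_swap : ∑ i ∈ Finset.range (k + 1),
        ∫⁻ x : ℝ, (‖G i x‖₊ : ENNReal) * (‖S i x‖₊ : ENNReal)
      = ∫⁻ x : ℝ, ∑ i ∈ Finset.range (k + 1), (‖G i x‖₊ : ENNReal) * (‖S i x‖₊ : ENNReal) :=
    (lintegral_finset_sum' _ fun i _ => ((hGmeas i).mul (hSmeas i)).aemeasurable).symm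
  -- Step 4: pointwise Cauchy-Schwarz
  have h_point : ∀ x : ℝ, ∑ i ∈ Finset.range (k + 1), (‖G i x‖₊ : ENNReal) * (‖S i x‖₊ : ENNReal)
      ≤ ENNReal.ofReal (u x) * ENNReal.ofReal (sqFn a (⇑(FSd A hA)) x) := by
    intro x
    have hsummx : Summable (fun j : ℕ => ‖SIf (⇑(FSd A hA)) (a j) (a (j + 1)) x‖ ^ 2
        + ‖SIf (⇑(FSd A hA)) (-(a (j + 1))) (-(a j)) x‖ ^ 2) :=
      summable_sq _ ρ hρc hρnn hρi hFT a hmono.monotone x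
    have hsqrtS : Real.sqrt (∑ i ∈ Finset.range (k + 1), ‖S i x‖ ^ 2)
        ≤ sqFn a (⇑(FSd A hA)) x := by
      rw [sqFn]
      apply Real.sqrt_le_sqrt
      rw [Finset.sum_range_succ]
      have hSk : ‖S k x‖ ^ 2 = ‖SIf (⇑(FSd A hA)) (-(a 0)) (a 0) x‖ ^ 2 := by
        rw [hSval, hllk, hrrk]
      have hrest : ∑ i ∈ Finset.range k, ‖S i x‖ ^ 2
          ≤ ∑' j : ℕ, (‖SIf (⇑(FSd A hA)) (a j) (a (j + 1)) x‖ ^ 2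
            + ‖SIf (⇑(FSd A hA)) (-(a (j + 1))) (-(a j)) x‖ ^ 2) := by
        have h1 : ∀ i ∈ Finset.range k, ‖S i x‖ ^ 2
            ≤ ‖SIf (⇑(FSd A hA)) (a i) (a (i + 1)) x‖ ^ 2
              + ‖SIf (⇑(FSd A hA)) (-(a (i + 1))) (-(a i)) x‖ ^ 2 := by
          intro i hi
          rw [hSval, hlllt i (Finset.mem_range.mp hi), hrrlt i (Finset.mem_range.mp hi)]
          exact le_add_of_nonneg_right (by positivity)
        exact le_trans (Finset.sum_le_sum h1)
          (Summable.sum_le_tsum _ (fun j _ => by positivity) hsummx)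
      rw [hSk]
      linarith
    calc ∑ i ∈ Finset.range (k + 1), (‖G i x‖₊ : ENNReal) * (‖S i x‖₊ : ENNReal)
        = ENNReal.ofReal (∑ i ∈ Finset.range (k + 1), ‖G i x‖ * ‖S i x‖) := by
          rw [ENNReal.ofReal_sum_of_nonneg
            (fun i _ => mul_nonneg (norm_nonneg _) (norm_nonneg _))]
          refine Finset.sum_congr rfl fun i _ => ?_
          rw [ENNReal.ofReal_mul (norm_nonneg _), ofReal_norm,
            ofReal_norm, enorm_eq_nnnorm, enorm_eq_nnnorm]
      _ ≤ ENNReal.ofReal (u x * sqFn a (⇑(FSd A hA)) x) := by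
          apply ENNReal.ofReal_le_ofReal
          calc ∑ i ∈ Finset.range (k + 1), ‖G i x‖ * ‖S i x‖
              ≤ Real.sqrt (∑ i ∈ Finset.range (k + 1), ‖G i x‖ ^ 2)
                * Real.sqrt (∑ i ∈ Finset.range (k + 1), ‖S i x‖ ^ 2) :=
                cs_sqrt _ _ _ (fun i => norm_nonneg _) (fun i => norm_nonneg _)
            _ ≤ u x * sqFn a (⇑(FSd A hA)) x := by
                rw [← huval x]
                exact mul_le_mul_of_nonneg_left hsqrtS (Real.sqrt_nonneg _)
      _ = ENNReal.ofReal (u x) * ENNReal.ofReal (sqFn a (⇑(FSd A hA)) x) :=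
          ENNReal.ofReal_mul (Real.sqrt_nonneg _)
  -- Step 5: Hoelder
  have hucont : Continuous u := by
    rw [hudef]
    exact Real.continuous_sqrt.comp
      (continuous_finset_sum _ fun i _ => ((continuous_gb (cc i) (w i)).norm.pow 2))
  have humeas : AEMeasurable (fun x => ENNReal.ofReal (u x)) (volume : Measure ℝ) :=
    (hucont.measurable.ennreal_ofReal).aemeasurable
  have hsqfn_eq : sqFn a (⇑(FSd A hA)) = fun x =>
      Real.sqrt (‖SIf (⇑(FSd A hA)) (-(a 0)) (a 0) x‖ ^ 2
        + (∑' j : ℕ, ENNReal.ofReal (‖SIf (⇑(FSd A hA)) (a j) (a (j + 1)) x‖ ^ 2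
            + ‖SIf (⇑(FSd A hA)) (-(a (j + 1))) (-(a j)) x‖ ^ 2)).toReal) := by
    funext x
    rw [sqFn]
    congr 1
    have hsummx : Summable (fun j : ℕ => ‖SIf (⇑(FSd A hA)) (a j) (a (j + 1)) x‖ ^ 2
        + ‖SIf (⇑(FSd A hA)) (-(a (j + 1))) (-(a j)) x‖ ^ 2) :=
      summable_sq _ ρ hρc hρnn hρi hFT a hmono.monotone x
    rw [← ENNReal.ofReal_tsum_of_nonneg (fun j => by positivity) hsummx,
      ENNReal.toReal_ofReal (tsum_nonneg fun j => by positivity)]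
  have hvmeas : AEMeasurable (fun x => ENNReal.ofReal (sqFn a (⇑(FSd A hA)) x))
      (volume : Measure ℝ) := by
    have hm : Measurable (sqFn a (⇑(FSd A hA))) := by
      rw [hsqfn_eq]
      apply Real.continuous_sqrt.measurable.comp
      apply Measurable.add
      · exact ((hSIfcont _ _).measurable.norm.pow_const 2)
      · exact (Measurable.ennreal_tsum fun j =>
          (((hSIfcont _ _).measurable.norm.pow_const 2).add
            ((hSIfcont _ _).measurable.norm.pow_const 2)).ennreal_ofReal).ennreal_toReal
    exact (hm.ennreal_ofReal).aemeasurable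
  have h_holder : ∫⁻ x : ℝ, ENNReal.ofReal (u x) * ENNReal.ofReal (sqFn a (⇑(FSd A hA)) x)
      ≤ (∫⁻ x : ℝ, (ENNReal.ofReal (u x)) ^ p) ^ (1 / p)
        * (∫⁻ x : ℝ, (ENNReal.ofReal (sqFn a (⇑(FSd A hA)) x)) ^ p') ^ (1 / p') :=
    ENNReal.lintegral_mul_le_Lp_mul_Lq volume hconj humeas hvmeas
  -- Step 6: the square function factor, via the boundedness hypothesis
  have h_v_factor : (∫⁻ x : ℝ, (ENNReal.ofReal (sqFn a (⇑(FSd A hA)) x)) ^ p') ^ (1 / p')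
      ≤ ENNReal.ofReal (max C 1) * ENNReal.ofReal (A ^ (1 / p)) := by
    have heq : (∫⁻ x : ℝ, (ENNReal.ofReal (sqFn a (⇑(FSd A hA)) x)) ^ p') ^ (1 / p')
        = eLpNorm (sqFn a (⇑(FSd A hA))) (ENNReal.ofReal p') volume := by
      rw [eLpNorm_eq_lintegral_rpow_enorm_toReal (ENNReal.ofReal_pos.mpr hp'0).ne'
        ENNReal.ofReal_ne_top, ENNReal.toReal_ofReal hp'0.le]
      congr 1
      apply lintegral_congr
      intro x
      congr 1
      exact (Real.enorm_eq_ofReal (Real.sqrt_nonneg _)).symm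
    rw [heq]
    calc eLpNorm (sqFn a (⇑(FSd A hA))) (ENNReal.ofReal p') volume
        ≤ ENNReal.ofReal C * eLpNorm (⇑(FSd A hA)) (ENNReal.ofReal p') volume := hbdd (FSd A hA)
      _ ≤ ENNReal.ofReal (max C 1) * ENNReal.ofReal (A ^ (1 / p)) := by
          apply mul_le_mul' (ENNReal.ofReal_le_ofReal (le_max_left C 1))
          have h2 := eLpNorm_FSd_le A hA p' hp'1.le (gauss_lint A A p' hA hA hp'1.le)
          rwa [hexp1] at h2
  -- Step 7: the bump factor
  have h_u_factor : (∫⁻ x : ℝ, (ENNReal.ofReal (u x)) ^ p) ^ (1 / p)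
      ≤ ENNReal.ofReal (Real.sqrt Sα) := by
    have hUpt : ∀ x : ℝ, (ENNReal.ofReal (u x)) ^ p
        = (∑ i ∈ Finset.range (k + 1), ENNReal.ofReal (‖G i x‖ ^ 2)) ^ (p / 2) := by
      intro x
      have hT0 : (0:ℝ) ≤ ∑ i ∈ Finset.range (k + 1), ‖G i x‖ ^ 2 :=
        Finset.sum_nonneg fun i _ => sq_nonneg _
      rw [ENNReal.ofReal_rpow_of_nonneg (by rw [huval]; exact Real.sqrt_nonneg _) hp0.le]
      rw [show u x ^ p = (∑ i ∈ Finset.range (k + 1), ‖G i x‖ ^ 2) ^ (p / 2) from by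
        rw [huval x, Real.sqrt_eq_rpow, ← Real.rpow_mul hT0,
          show (1:ℝ) / 2 * p = p / 2 from by ring]]
      rw [← ENNReal.ofReal_rpow_of_nonneg hT0 (by positivity : (0:ℝ) ≤ p / 2)]
      rw [ENNReal.ofReal_sum_of_nonneg (fun i _ => sq_nonneg _)]
    have hMink := lint_Lp_sum_le (Finset.range (k + 1))
      (fun i x => ENNReal.ofReal (‖G i x‖ ^ 2))
      (fun i => (((continuous_gb (cc i) (w i)).norm.pow 2).measurable.ennreal_ofReal).aemeasurable)
      (p / 2) (by linarith)
    have heach : ∀ i ∈ Finset.range (k + 1),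
        (∫⁻ x : ℝ, (ENNReal.ofReal (‖G i x‖ ^ 2)) ^ (p / 2)) ^ (1 / (p / 2))
          ≤ ENNReal.ofReal ((w i) ^ α) := by
      intro i hi
      have hpt2 : ∀ x : ℝ, (ENNReal.ofReal (‖G i x‖ ^ 2)) ^ (p / 2)
          = (ENNReal.ofReal (w i * Real.exp (-(Real.pi * (w i) ^ 2) * x ^ 2))) ^ p := by
        intro x
        rw [ENNReal.ofReal_rpow_of_nonneg (sq_nonneg _) (by positivity : (0:ℝ) ≤ p / 2)]
        rw [ENNReal.ofReal_rpow_of_nonneg (mul_nonneg (hwpos i).le (Real.exp_nonneg _)) hp0.le]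
        congr 1
        rw [show ‖G i x‖ ^ 2 = ‖G i x‖ ^ ((2:ℕ):ℝ) from (Real.rpow_natCast _ 2).symm]
        rw [← Real.rpow_mul (norm_nonneg _), show ((2:ℕ):ℝ) * (p / 2) = p from by
          push_cast; ring]
        rw [hGval, norm_gb (cc i) (w i) (hwpos i) x]
      calc (∫⁻ x : ℝ, (ENNReal.ofReal (‖G i x‖ ^ 2)) ^ (p / 2)) ^ (1 / (p / 2))
          ≤ (ENNReal.ofReal ((w i) ^ p / (w i))) ^ (1 / (p / 2)) := by
            apply ENNReal.rpow_le_rpow _ (by positivity)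
            rw [lintegral_congr hpt2]
            exact gauss_lint (w i) (w i) p (hwpos i) (hwpos i) hp1.le
        _ = ENNReal.ofReal ((w i) ^ α) := by
            rw [ENNReal.ofReal_rpow_of_nonneg
              (div_nonneg (Real.rpow_nonneg (hwpos i).le p) (hwpos i).le)
              (by positivity : (0:ℝ) ≤ 1 / (p / 2))]
            congr 1
            rw [show (w i) ^ p / (w i) = (w i) ^ (p - 1) from by
              rw [Real.rpow_sub (hwpos i), Real.rpow_one]]
            rw [← Real.rpow_mul (hwpos i).le]
            congr 1
            rw [hαdef]
            field_simp
    calc (∫⁻ x : ℝ, (ENNReal.ofReal (u x)) ^ p) ^ (1 / p)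
        = ((∫⁻ x : ℝ, (∑ i ∈ Finset.range (k + 1), ENNReal.ofReal (‖G i x‖ ^ 2)) ^ (p / 2))
            ^ (1 / (p / 2))) ^ ((1:ℝ) / 2) := by
          rw [lintegral_congr hUpt, ← ENNReal.rpow_mul,
            show (1 / (p / 2)) * ((1:ℝ) / 2) = 1 / p from by field_simp]
      _ ≤ (∑ i ∈ Finset.range (k + 1),
            (∫⁻ x : ℝ, (ENNReal.ofReal (‖G i x‖ ^ 2)) ^ (p / 2)) ^ (1 / (p / 2))) ^ ((1:ℝ) / 2) :=
          ENNReal.rpow_le_rpow hMink (by norm_num)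
      _ ≤ (∑ i ∈ Finset.range (k + 1), ENNReal.ofReal ((w i) ^ α)) ^ ((1:ℝ) / 2) :=
          ENNReal.rpow_le_rpow (Finset.sum_le_sum heach) (by norm_num)
      _ = (ENNReal.ofReal (∑ i ∈ Finset.range (k + 1), (w i) ^ α)) ^ ((1:ℝ) / 2) := by
          rw [ENNReal.ofReal_sum_of_nonneg (fun i _ => Real.rpow_nonneg (hwpos i).le α)]
      _ ≤ (ENNReal.ofReal Sα) ^ ((1:ℝ) / 2) := by
          apply ENNReal.rpow_le_rpow _ (by norm_num)
          apply ENNReal.ofReal_le_ofReal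
          rw [Finset.sum_range_succ, hwk]
          have hterm : ∀ i ∈ Finset.range k, (w i) ^ α ≤ (a (i + 1) - a i) ^ α := by
            intro i hi
            rw [hwlt i (Finset.mem_range.mp hi)]
            apply Real.rpow_le_rpow (by linarith [hstep i]) (by linarith [hstep i]) hα0.le
          have h2 := Finset.sum_le_sum hterm
          rw [hSαdef]
          linarith
      _ = ENNReal.ofReal (Real.sqrt Sα) := by
          rw [ENNReal.ofReal_rpow_of_nonneg hSα0 (by norm_num), ← Real.sqrt_eq_rpow]
  -- combine the chain
  have h_main : ENNReal.ofReal (Real.exp (-(2 * Real.pi)) * A)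
      ≤ ENNReal.ofReal (Real.sqrt Sα * (max C 1 * A ^ (1 / p))) := by
    calc ENNReal.ofReal (Real.exp (-(2 * Real.pi)) * A)
        ≤ ∑ i ∈ Finset.range (k + 1),
            ENNReal.ofReal (Real.exp (-(2 * Real.pi)) * (rr i - ll i)) := h_lower_sum
      _ ≤ ∑ i ∈ Finset.range (k + 1),
            ∫⁻ x : ℝ, (‖G i x‖₊ : ENNReal) * (‖S i x‖₊ : ENNReal) := h_sum_int
      _ = ∫⁻ x : ℝ, ∑ i ∈ Finset.range (k + 1),
            (‖G i x‖₊ : ENNReal) * (‖S i x‖₊ : ENNReal) := h_swap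
      _ ≤ ∫⁻ x : ℝ, ENNReal.ofReal (u x) * ENNReal.ofReal (sqFn a (⇑(FSd A hA)) x) :=
          lintegral_mono h_point
      _ ≤ (∫⁻ x : ℝ, (ENNReal.ofReal (u x)) ^ p) ^ (1 / p)
            * (∫⁻ x : ℝ, (ENNReal.ofReal (sqFn a (⇑(FSd A hA)) x)) ^ p') ^ (1 / p') := h_holder
      _ ≤ ENNReal.ofReal (Real.sqrt Sα)
            * (ENNReal.ofReal (max C 1) * ENNReal.ofReal (A ^ (1 / p))) :=
          mul_le_mul' h_u_factor h_v_factor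
      _ = ENNReal.ofReal (Real.sqrt Sα * (max C 1 * A ^ (1 / p))) := by
          rw [← ENNReal.ofReal_mul hK0.le, ← ENNReal.ofReal_mul (Real.sqrt_nonneg _)]
  have h_real : Real.exp (-(2 * Real.pi)) * A ≤ Real.sqrt Sα * (max C 1 * A ^ ((1:ℝ) / p)) :=
    (ENNReal.ofReal_le_ofReal_iff
      (mul_nonneg (Real.sqrt_nonneg _)
        (mul_nonneg hK0.le (Real.rpow_nonneg hA.le _)))).mp h_main
  -- final algebra
  have hApow : A ^ ((1:ℝ) / p) * A ^ ((p - 1) / p) = A := by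
    rw [← Real.rpow_add hA, show (1:ℝ) / p + (p - 1) / p = 1 from by field_simp; ring, Real.rpow_one]
  have hpos1p : (0:ℝ) < A ^ ((1:ℝ) / p) := Real.rpow_pos_of_pos hA _
  have hXle : A ^ ((p - 1) / p) ≤ Real.exp (2 * Real.pi) * max C 1 * Real.sqrt Sα := by
    rw [← mul_le_mul_iff_right₀ hpos1p, hApow]
    have hE : Real.exp (2 * Real.pi) * Real.exp (-(2 * Real.pi)) = 1 := by
      rw [← Real.exp_add]; norm_num
    calc A = (Real.exp (2 * Real.pi) * Real.exp (-(2 * Real.pi))) * A := by rw [hE]; ring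
      _ = Real.exp (2 * Real.pi) * (Real.exp (-(2 * Real.pi)) * A) := by ring
      _ ≤ Real.exp (2 * Real.pi) * (Real.sqrt Sα * (max C 1 * A ^ ((1:ℝ) / p))) :=
          mul_le_mul_of_nonneg_left h_real (Real.exp_nonneg _)
      _ = A ^ ((1:ℝ) / p) * (Real.exp (2 * Real.pi) * max C 1 * Real.sqrt Sα) := by ring
  have hXnn : 0 ≤ A ^ ((p - 1) / p) := Real.rpow_nonneg hA.le _
  have hsq := mul_self_le_mul_self hXnn hXle
  have h1 : A ^ ((p - 1) / p) * A ^ ((p - 1) / p) = A ^ α := by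
    rw [← Real.rpow_add hA, hαdef]
    congr 1
    ring
  have h2 : (Real.exp (2 * Real.pi) * max C 1 * Real.sqrt Sα)
      * (Real.exp (2 * Real.pi) * max C 1 * Real.sqrt Sα)
      = Real.exp (4 * Real.pi) * (max C 1) ^ 2 * Sα := by
    have e1 : Real.exp (2 * Real.pi) * Real.exp (2 * Real.pi) = Real.exp (4 * Real.pi) := by
      rw [← Real.exp_add]; ring_nf
    have e2 : Real.sqrt Sα * Real.sqrt Sα = Sα := Real.mul_self_sqrt hSα0
    calc (Real.exp (2 * Real.pi) * max C 1 * Real.sqrt Sα)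
        * (Real.exp (2 * Real.pi) * max C 1 * Real.sqrt Sα)
        = (Real.exp (2 * Real.pi) * Real.exp (2 * Real.pi))
            * ((max C 1) ^ 2 * (Real.sqrt Sα * Real.sqrt Sα)) := by ring
      _ = Real.exp (4 * Real.pi) * (max C 1) ^ 2 * Sα := by rw [e1, e2]; ring
  calc A ^ α = A ^ ((p - 1) / p) * A ^ ((p - 1) / p) := h1.symm
    _ ≤ (Real.exp (2 * Real.pi) * max C 1 * Real.sqrt Sα)
        * (Real.exp (2 * Real.pi) * max C 1 * Real.sqrt Sα) := hsq
    _ = Real.exp (4 * Real.pi) * (max C 1) ^ 2 * Sα := h2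
end
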